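/- Every recurrent infinite word avoiding the formula ABCA.ACBA.ABCBA is square-free, and no infinite ternary square-free word avoids all occurrences h of ABCA.ACBA.ABCBA with |h(A)|=1, |h(B)|≤2, |h(C)|≤3; consequently λ(ABCA.ACBA.ABCBA) ≥ 4. -/

import Mathlib

/-- The finite factor of the infinite word `w` starting at position `i` of length `n`. -/
def extract {α : Type*} (w : ℕ → α) (i n : ℕ) : List α :=
  (List.range n).map (fun k => w (i + k))

/-- `u` is a (finite) factor of the infinite word `w`. -/
def IsFactorOf {α : Type*} (u : List α) (w : ℕ → α) : Prop :=
  ∃ i, u = extract w i u.length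

/-- A morphism (given on variables/letters) is non-erasing. -/
def NonErasing {V α : Type*} (h : V → List α) : Prop := ∀ v, h v ≠ []

/-- The image of a pattern `p` under the morphism induced by `h`. -/
def patImage {V α : Type*} (h : V → List α) (p : List V) : List α :=
  (p.map h).flatten

/-- `h` is an occurrence of the formula `f` (a set of fragments) in the infinite word `w`:
`h` is non-erasing and the `h`-image of every fragment of `f` is a factor of `w`. -/
def OccursIn {V α : Type*} (f : Set (List V)) (h : V → List α) (w : ℕ → α) : Prop :=
  NonErasing h ∧ ∀ p ∈ f, IsFactorOf (patImage h p) w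

/-- The infinite word `w` avoids the formula `f`. -/
def Avoids {V α : Type*} (w : ℕ → α) (f : Set (List V)) : Prop :=
  ∀ h : V → List α, ¬ OccursIn f h w

/-- An infinite word is recurrent if every factor occurs infinitely often. -/
def Recurrent {α : Type*} (w : ℕ → α) : Prop :=
  ∀ u : List α, IsFactorOf u w → ∀ N, ∃ i ≥ N, u = extract w i u.length

/-- An infinite word is square-free if it has no factor `uu` with `u` nonempty. -/
def SquareFree {α : Type*} (w : ℕ → α) : Prop :=
  ∀ u : List α, u ≠ [] → ¬ IsFactorOf (u ++ u) w

/-- The formula `f'` divides the formula `f`: some non-erasing morphism maps every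
fragment of `f'` to a factor of some fragment of `f`. -/
def Divides {V' V : Type*} (f' : Set (List V')) (f : Set (List V)) : Prop :=
  ∃ h : V' → List V, NonErasing h ∧ ∀ q ∈ f', ∃ p ∈ f, patImage h q <:+: p

/-- The avoidability index of a formula: the least alphabet size over which there is an
infinite word avoiding it. -/
noncomputable def lamIdx {V : Type*} (f : Set (List V)) : ℕ :=
  sInf {n : ℕ | ∃ w : ℕ → Fin n, Avoids w f}

/-- A formula is avoidable if some infinite word over some finite alphabet avoids it. -/
def Avoidable {V : Type*} (f : Set (List V)) : Prop :=
  ∃ (n : ℕ) (w : ℕ → Fin n), Avoids w f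

/-- An infinite word is `r`-free: every factor of the form `x ++ y ++ x` with `x ≠ []`
(a repetition of period `|xy|` and exponent `|xyx|/|xy|`) has exponent `< r`. -/
def AlphaFree {α : Type*} (w : ℕ → α) (r : ℝ) : Prop :=
  ∀ x y : List α, x ≠ [] → IsFactorOf (x ++ y ++ x) w →
    ((2 * x.length + y.length : ℝ) / (x.length + y.length)) < r

/-- An infinite word is `r⁺`-free: every such repetition has exponent `≤ r`. -/
def AlphaPlusFree {α : Type*} (w : ℕ → α) (r : ℝ) : Prop :=
  ∀ x y : List α, x ≠ [] → IsFactorOf (x ++ y ++ x) w →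
    ((2 * x.length + y.length : ℝ) / (x.length + y.length)) ≤ r

/-- A finite word is `r⁺`-free. -/
def AlphaPlusFreeList {α : Type*} (u : List α) (r : ℝ) : Prop :=
  ∀ x y : List α, x ≠ [] → (x ++ y ++ x) <:+: u →
    ((2 * x.length + y.length : ℝ) / (x.length + y.length)) ≤ r

/-- The formula ABCA.ACBA.ABCBA, with variables A=0, B=1, C=2. -/
def impFormula : Set (List (Fin 3)) := {[0,1,2,0], [0,2,1,0], [0,1,2,1,0]}

namespace ST18


variable {α : Type*} {w : ℕ → α}

lemma extract_length (w : ℕ → α) (i n : ℕ) : (extract w i n).length = n := by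
  simp [extract]

lemma extract_add (w : ℕ → α) (i a b : ℕ) :
    extract w i (a + b) = extract w i a ++ extract w (i + a) b := by
  simp [extract, List.range_add, Nat.add_assoc]

lemma extract_factor (w : ℕ → α) (i n : ℕ) : IsFactorOf (extract w i n) w :=
  ⟨i, by rw [extract_length]⟩

lemma split2 {u v : List α} {i : ℕ}
    (h : u ++ v = extract w i (u.length + v.length)) :
    u = extract w i u.length ∧ v = extract w (i + u.length) v.length := by
  rw [extract_add] at h
  exact List.append_inj h (by rw [extract_length])

lemma split2' {u v : List α} {i n : ℕ} (h : u ++ v = extract w i n)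
    (hn : n = u.length + v.length) :
    u = extract w i u.length ∧ v = extract w (i + u.length) v.length := split2 (hn ▸ h)

lemma extract_infix_extract {d l n i : ℕ} (h : d + l ≤ n) :
    extract w (i + d) l <:+: extract w i n := by
  obtain ⟨m, rfl⟩ : ∃ m, n = d + (l + m) := ⟨n - d - l, by omega⟩
  rw [extract_add, extract_add]
  exact ⟨extract w i d, extract w (i + d + l) m, by simp⟩


lemma isFactor_of_infix {s t : List α} (hst : s <:+: t) (ht : IsFactorOf t w) :
    IsFactorOf s w := by
  obtain ⟨i, hi⟩ := ht
  obtain ⟨a, b, hab⟩ := hst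
  have hl : t.length = a.length + (s ++ b).length := by
    rw [← hab, List.append_assoc, List.length_append]
  have h1 : a ++ (s ++ b) = extract w i (a.length + (s ++ b).length) := by
    rw [← hl, ← hi, ← hab]; simp
  have h2 := (split2 h1).2
  rw [List.length_append] at h2
  exact ⟨i + a.length, (split2 h2).1⟩

lemma glue3 {u1 u2 u3 : List α} {i a b c : ℕ}
    (h1 : u1 = extract w i a) (h2 : u2 = extract w (i + a) b)
    (h3 : u3 = extract w (i + a + b) c) :
    u1 ++ (u2 ++ u3) = extract w i (a + (b + c)) := by
  rw [extract_add, extract_add, ← h1, ← h2, ← h3]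

lemma self_return (hrec : Recurrent w) {v : List α} (hyp : IsFactorOf v w) :
    ∃ z : List α, IsFactorOf (v ++ (z ++ v)) w := by
  obtain ⟨i, hi⟩ := hyp
  obtain ⟨j, hj, hj2⟩ := hrec v ⟨i, hi⟩ (i + v.length)
  set z := extract w (i + v.length) (j - (i + v.length)) with hzdef
  have hz : z = extract w (i + v.length) z.length := by
    rw [hzdef, extract_length]
  have h3 : v = extract w (i + v.length + z.length) v.length := by
    have hzl : z.length = j - (i + v.length) := by rw [hzdef, extract_length]
    rw [hzl, show i + v.length + (j - (i + v.length)) = j from by omega]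
    exact hj2
  have hg := glue3 hi hz h3
  refine ⟨z, i, ?_⟩
  rw [show (v ++ (z ++ v)).length = v.length + (z.length + v.length) from by simp]
  exact hg

/-- A factor of shape `W ++ z ++ W` with `W = uu ++ m ++ uu` yields an occurrence. -/
lemma occW (w : ℕ → α) (u m n : List α) (hu : u ≠ [])
    (hf : IsFactorOf (((u ++ u) ++ (m ++ (u ++ u))) ++ (n ++ ((u ++ u) ++ (m ++ (u ++ u))))) w) :
    ∃ h : Fin 3 → List α, OccursIn impFormula h w := by
  classical
  refine ⟨fun v => if v = 0 then u else if v = 1 then u ++ m ++ u else u ++ n ++ u, ?_, ?_⟩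
  · intro v
    by_cases h0 : v = 0 <;> by_cases h1 : v = 1 <;> simp [h0, h1, hu]
  · intro p hp
    have him : ∀ q : List (Fin 3),
        patImage (fun v : Fin 3 => if v = 0 then u else if v = 1 then u ++ m ++ u else u ++ n ++ u) q
          = (q.map (fun v : Fin 3 => if v = 0 then u else if v = 1 then u ++ m ++ u else u ++ n ++ u)).flatten :=
      fun _ => rfl
    simp only [impFormula, Set.mem_insert_iff, Set.mem_singleton_iff] at hp
    rcases hp with hp | hp | hp <;> subst hp
    · refine isFactor_of_infix ?_ hf
      refine ⟨[], m ++ (u ++ u), ?_⟩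
      simp [patImage, List.append_assoc]
    · refine isFactor_of_infix ?_ hf
      refine ⟨(u ++ u) ++ m, [], ?_⟩
      simp [patImage, List.append_assoc]
    · refine isFactor_of_infix ?_ hf
      refine ⟨[], [], ?_⟩
      simp [patImage, List.append_assoc]

theorem partA (w : ℕ → α) (hrec : Recurrent w) (hav : Avoids w impFormula) :
    SquareFree w := by
  intro u hu hfac
  obtain ⟨z1, hW⟩ := self_return hrec hfac
  obtain ⟨z2, hBig⟩ := self_return hrec hW
  obtain ⟨h, hocc⟩ := occW w u z1 z2 hu (by
    have : (u ++ u) ++ (z1 ++ (u ++ u)) = u ++ u ++ (z1 ++ (u ++ u)) := by simp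
    rw [this] at hBig ⊢
    exact hBig)
  exact hav h hocc


/-- odd part -/
def op2 (m : ℕ) : ℕ :=
  if h : m % 2 = 1 ∨ m = 0 then m else op2 (m / 2)
termination_by m
decreasing_by omega

lemma op2_spec : ∀ k u : ℕ, u % 2 = 1 → op2 (2 ^ k * u) = u := by
  intro k
  induction k with
  | zero => intro u hu; rw [op2]; simp [hu]
  | succ k ih =>
    intro u hu
    have h1 : (2 ^ (k+1) * u) % 2 = 0 := by
      rw [pow_succ, mul_comm (2^k) 2, mul_assoc]; simp [Nat.mul_mod_right]
    have h2 : 2 ^ (k+1) * u ≠ 0 := by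
      have hu0 : u ≠ 0 := by omega
      positivity
    rw [op2]
    have h3 : ¬ ((2 ^ (k+1) * u) % 2 = 1 ∨ 2 ^ (k+1) * u = 0) := by omega
    rw [dif_neg h3]
    have h4 : 2 ^ (k+1) * u / 2 = 2 ^ k * u := by
      rw [pow_succ, mul_comm (2^k) 2, mul_assoc]; omega
    rw [h4]; exact ih u hu

lemma decomp : ∀ m : ℕ, m ≠ 0 → ∃ k u, u % 2 = 1 ∧ m = 2 ^ k * u := by
  intro m
  induction m using Nat.strong_induction_on with
  | _ m ih =>
    intro hm
    rcases Nat.even_or_odd m with he | ho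
    · obtain ⟨t, ht⟩ := he
      have ht0 : t ≠ 0 := by omega
      obtain ⟨k, u, hu, heq⟩ := ih t (by omega) ht0
      exact ⟨k+1, u, hu, by rw [ht, heq, pow_succ]; ring⟩
    · exact ⟨0, m, Nat.odd_iff.mp ho, by ring⟩

/-- The 4-letter word avoiding the formula. -/
def w4 (n : ℕ) : Fin 4 :=
  ⟨n % 2 + 2 * ((op2 (n+1) / 2) % 2), by omega⟩

def Mt (x y l : ℕ) : Prop := ∀ j < l, w4 (x + j) = w4 (y + j)

lemma Mt.symm {x y l : ℕ} (h : Mt x y l) : Mt y x l := fun j hj => (h j hj).symm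

lemma key0 (n D : ℕ) (hD : D % 2 = 1) : w4 n ≠ w4 (n + D) := by
  intro h
  have hv := congrArg Fin.val h
  simp only [w4] at hv
  omega

lemma key1 (k v u n : ℕ) (hv : v % 2 = 1) (hu : u % 2 = 1)
    (hn : n + 1 = 2 ^ k * v) : w4 n ≠ w4 (n + 2 ^ (k+1) * u) := by
  intro h
  have hop1 : op2 (n+1) = v := by rw [hn]; exact op2_spec k v hv
  have he : n + 2 ^ (k+1) * u + 1 = 2 ^ k * (v + 2*u) := by
    have e1 : 2 ^ (k+1) * u = 2 ^ k * (2 * u) := by rw [pow_succ]; ring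
    have e2 : 2 ^ k * (v + 2*u) = 2 ^ k * v + 2 ^ k * (2*u) := by ring
    omega
  have hop2 : op2 (n + 2 ^ (k+1) * u + 1) = v + 2*u := by
    rw [he]; exact op2_spec k _ (by omega)
  have hpar : (n + 2 ^ (k+1) * u) % 2 = n % 2 := by
    have : 2 ^ (k+1) * u = 2 * (2 ^ k * u) := by rw [pow_succ]; ring
    omega
  have hv2 := congrArg Fin.val h
  simp only [w4, hop1, hop2, hpar] at hv2
  omega

lemma window (x l k : ℕ) (hl : 2 ^ (k+1) ≤ l) :
    ∃ j < l, ∃ v, v % 2 = 1 ∧ x + j + 1 = 2 ^ k * v := by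
  have hA0 : 0 < 2 ^ k := Nat.pow_pos (by norm_num)
  have hM : 2 ^ (k+1) = 2 * 2 ^ k := by rw [pow_succ]; ring
  have hdm := Nat.div_add_mod (x+1) (2 * 2 ^ k)
  have htlt : (x+1) % (2 * 2 ^ k) < 2 * 2 ^ k := Nat.mod_lt _ (by omega)
  set A := 2 ^ k
  set t := (x+1) % (2 * A) with htdef
  set qq := (x+1) / (2 * A) with hqdef
  by_cases hc : t ≤ A
  · refine ⟨A - t, by omega, 2*qq+1, by omega, ?_⟩
    have e : A * (2*qq+1) = 2*A*qq + A := by ring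
    omega
  · refine ⟨3*A - t, by omega, 2*qq+3, by omega, ?_⟩
    have e : A * (2*qq+3) = 2*A*qq + 3*A := by ring
    omega

lemma mainM (k u x l : ℕ) (hu : u % 2 = 1) (hl : 2 ^ k ≤ l) :
    ¬ Mt x (x + 2 ^ k * u) l := by
  intro hMt
  cases k with
  | zero =>
    have h0 := hMt 0 (by omega)
    simp only [Nat.add_zero] at h0
    exact key0 x (2^0*u) (by simpa using hu) (by simpa using h0)
  | succ k' =>
    obtain ⟨j, hj, v, hv, hxj⟩ := window x l k' hl
    have h0 := hMt j hj
    rw [show x + 2 ^ (k'+1) * u + j = (x + j) + 2 ^ (k'+1) * u from by ring] at h0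
    exact key1 k' v u (x+j) hv hu hxj h0

lemma mtB {x y l : ℕ} (h : Mt x y l) {k u : ℕ} (hu : u % 2 = 1)
    (hxy : y = x + 2 ^ k * u) : l < 2 ^ k := by
  by_contra hcon
  exact mainM k u x l hu (by omega) (hxy ▸ h)


lemma pow_sub_mul (c k : ℕ) (h : c ≤ k) : 2 ^ c * 2 ^ (k - c) = 2 ^ k := by
  rw [← pow_add]; congr 1; omega

lemma even_pow_mul {c k u : ℕ} (h : c < k) : 2 ^ (k - c) * u % 2 = 0 := by
  have e : 2 ^ (k - c) * u = 2 * (2 ^ (k - c - 1) * u) := by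
    have h2 : k - c = (k - c - 1) + 1 := by omega
    calc 2 ^ (k - c) * u = 2 ^ ((k - c - 1) + 1) * u := by rw [← h2]
    _ = 2 * (2 ^ (k - c - 1) * u) := by rw [pow_succ]; ring
  omega

/-- The core 2-adic contradiction. -/
theorem core (s1 s3 P Q R : ℕ) (hP : 0 < P) (hQ : 0 < Q) (hR : 0 < R)
    (C1 : Mt s1 (s1 + P + Q + R) P)
    (C2 : Mt s1 s3 (P + (Q + R)))
    (C3 : Mt (s1 + P) (s3 + P + Q + R) Q)
    (C4 : Mt s1 (s3 + P + Q + R + Q) P) : False := by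
  obtain ⟨k1, u1, hu1, hH⟩ := decomp (P + Q + R) (by omega)
  have hα : P < 2 ^ k1 := mtB C1 hu1 (by omega)
  have hk1H : 2 ^ k1 ≤ 2 ^ k1 * u1 := Nat.le_mul_of_pos_right _ (by omega)
  obtain ⟨a, u3, hu3, hQR⟩ := decomp (Q + R) (by omega)
  have haQR : 2 ^ a ≤ 2 ^ a * u3 := Nat.le_mul_of_pos_right _ (by omega)
  have branch_i : ¬ (k1 < a) := by
    intro hk
    have d1 : 2 ^ k1 ∣ P + Q + R := hH ▸ Dvd.intro _ rfl
    have d2 : 2 ^ k1 ∣ Q + R := dvd_trans (pow_dvd_pow 2 hk.le) (hQR ▸ Dvd.intro _ rfl)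
    have d3 : 2 ^ k1 ∣ P := by
      have := Nat.dvd_sub d1 d2
      rwa [show P + Q + R - (Q + R) = P from by omega] at this
    exact absurd (Nat.le_of_dvd hP d3) (by omega)
  have hak1 : a ≤ k1 := by omega
  have hPa : 2 ^ a ≤ P := by
    have d1 : 2 ^ a ∣ P + Q + R := dvd_trans (pow_dvd_pow 2 hak1) (hH ▸ Dvd.intro _ rfl)
    have d2 : 2 ^ a ∣ Q + R := hQR ▸ Dvd.intro _ rfl
    have d3 : 2 ^ a ∣ P := by
      have := Nat.dvd_sub d1 d2
      rwa [show P + Q + R - (Q + R) = P from by omega] at this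
    exact Nat.le_of_dvd hP d3
  obtain ⟨c, u4, hu4, hQd⟩ := decomp Q (by omega)
  have hcQ : 2 ^ c ≤ 2 ^ c * u4 := Nat.le_mul_of_pos_right _ (by omega)
  suffices hβγ : Q < 2 ^ a ∧ P < 2 ^ c by
    obtain ⟨hβ, hγ⟩ := hβγ
    have hca : c < a := (Nat.pow_lt_pow_iff_right (by norm_num : 1 < 2)).mp (by omega)
    have : (2:ℕ) ^ c < 2 ^ a := (Nat.pow_lt_pow_iff_right (by norm_num : 1 < 2)).mpr hca
    omega
  rcases Nat.lt_trichotomy s1 s3 with hlt | heq | hgt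
  · -- s1 < s3
    obtain ⟨k2, u2, hu2, hd⟩ := decomp (s3 - s1) (by omega)
    have hk2 : P + (Q + R) < 2 ^ k2 := mtB C2 hu2 (by omega)
    have hk2d : 2 ^ k2 ≤ 2 ^ k2 * u2 := Nat.le_mul_of_pos_right _ (by omega)
    have hak2 : a < k2 := (Nat.pow_lt_pow_iff_right (by norm_num : 1 < 2)).mp (by omega)
    have hodd3 : (u3 + 2 ^ (k2 - a) * u2) % 2 = 1 := by
      have := even_pow_mul (u := u2) hak2
      omega
    have hβ : Q < 2 ^ a := by
      refine mtB C3 hodd3 ?_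
      have e : 2 ^ a * (u3 + 2 ^ (k2 - a) * u2) = 2 ^ a * u3 + (2 ^ a * 2 ^ (k2 - a)) * u2 := by
        ring
      rw [pow_sub_mul a k2 hak2.le] at e
      omega
    refine ⟨hβ, ?_⟩
    have hca : c < a := (Nat.pow_lt_pow_iff_right (by norm_num : 1 < 2)).mp (by omega)
    have hck1' : c < k1 := by omega
    have hodd4 : (u4 + 2 ^ (k1 - c) * u1 + 2 ^ (k2 - c) * u2) % 2 = 1 := by
      have h1 := even_pow_mul (u := u1) hck1'
      have h2 := even_pow_mul (u := u2) (show c < k2 by omega)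
      omega
    refine mtB C4 hodd4 ?_
    have e : 2 ^ c * (u4 + 2 ^ (k1 - c) * u1 + 2 ^ (k2 - c) * u2)
        = 2 ^ c * u4 + (2 ^ c * 2 ^ (k1 - c)) * u1 + (2 ^ c * 2 ^ (k2 - c)) * u2 := by ring
    rw [pow_sub_mul c k1 hck1'.le, pow_sub_mul c k2 (by omega)] at e
    omega
  · -- s1 = s3
    subst heq
    have hβ : Q < 2 ^ a := mtB C3 hu3 (by omega)
    refine ⟨hβ, ?_⟩
    have hca : c < a := (Nat.pow_lt_pow_iff_right (by norm_num : 1 < 2)).mp (by omega)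
    have hck1' : c < k1 := by omega
    have hodd4 : (u4 + 2 ^ (k1 - c) * u1) % 2 = 1 := by
      have h1 := even_pow_mul (u := u1) hck1'
      omega
    refine mtB C4 hodd4 ?_
    have e : 2 ^ c * (u4 + 2 ^ (k1 - c) * u1) = 2 ^ c * u4 + (2 ^ c * 2 ^ (k1 - c)) * u1 := by
      ring
    rw [pow_sub_mul c k1 hck1'.le] at e
    omega
  · -- s3 < s1
    obtain ⟨k2, u2, hu2, hd⟩ := decomp (s1 - s3) (by omega)
    have hk2 : P + (Q + R) < 2 ^ k2 := mtB C2.symm hu2 (by omega)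
    have hk2d : 2 ^ k2 ≤ 2 ^ k2 * u2 := Nat.le_mul_of_pos_right _ (by omega)
    have hak2 : a < k2 := (Nat.pow_lt_pow_iff_right (by norm_num : 1 < 2)).mp (by omega)
    have hsplit2 : 2 ^ a * (2 ^ (k2 - a) * u2) = 2 ^ k2 * u2 := by
      rw [show 2 ^ a * (2 ^ (k2 - a) * u2) = (2 ^ a * 2 ^ (k2 - a)) * u2 from by ring,
        pow_sub_mul a k2 hak2.le]
    have h4 : u3 < 2 ^ (k2 - a) * u2 :=
      Nat.lt_of_mul_lt_mul_left (a := 2 ^ a) (by omega)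
    have hodd3 : (2 ^ (k2 - a) * u2 - u3) % 2 = 1 := by
      have h1 := even_pow_mul (u := u2) hak2
      omega
    have hβ : Q < 2 ^ a := by
      refine mtB C3.symm hodd3 ?_
      have hW3e : 2 ^ (k2 - a) * u2 = (2 ^ (k2 - a) * u2 - u3) + u3 := by omega
      have e : 2 ^ a * ((2 ^ (k2 - a) * u2 - u3) + u3)
          = 2 ^ a * (2 ^ (k2 - a) * u2 - u3) + 2 ^ a * u3 := by ring
      rw [← hW3e, hsplit2] at e
      omega
    refine ⟨hβ, ?_⟩
    have hca : c < a := (Nat.pow_lt_pow_iff_right (by norm_num : 1 < 2)).mp (by omega)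
    have hck1' : c < k1 := by omega
    have hck2 : c < k2 := by omega
    have hoddV : (u4 + 2 ^ (k1 - c) * u1) % 2 = 1 := by
      have := even_pow_mul (u := u1) hck1'
      omega
    have hHQ : (P + Q + R) + Q = 2 ^ c * (u4 + 2 ^ (k1 - c) * u1) := by
      have e : 2 ^ c * (u4 + 2 ^ (k1 - c) * u1) = 2 ^ c * u4 + (2 ^ c * 2 ^ (k1 - c)) * u1 := by
        ring
      rw [pow_sub_mul c k1 hck1'.le] at e
      omega
    have hsplitc : 2 ^ c * (2 ^ (k2 - c) * u2) = 2 ^ k2 * u2 := by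
      rw [show 2 ^ c * (2 ^ (k2 - c) * u2) = (2 ^ c * 2 ^ (k2 - c)) * u2 from by ring,
        pow_sub_mul c k2 hck2.le]
    rcases Nat.lt_trichotomy (s1 - s3) ((P + Q + R) + Q) with hlt2 | heq2 | hgt2
    · -- d < H+Q : use C4 directly
      have h5 : 2 ^ (k2 - c) * u2 < u4 + 2 ^ (k1 - c) * u1 :=
        Nat.lt_of_mul_lt_mul_left (a := 2 ^ c) (by omega)
      have hodd4 : ((u4 + 2 ^ (k1 - c) * u1) - 2 ^ (k2 - c) * u2) % 2 = 1 := by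
        have := even_pow_mul (u := u2) hck2
        omega
      refine mtB C4 hodd4 ?_
      have hWe : (u4 + 2 ^ (k1 - c) * u1)
          = ((u4 + 2 ^ (k1 - c) * u1) - 2 ^ (k2 - c) * u2) + 2 ^ (k2 - c) * u2 := by omega
      have e : 2 ^ c * (((u4 + 2 ^ (k1 - c) * u1) - 2 ^ (k2 - c) * u2) + 2 ^ (k2 - c) * u2)
          = 2 ^ c * ((u4 + 2 ^ (k1 - c) * u1) - 2 ^ (k2 - c) * u2)
            + 2 ^ c * (2 ^ (k2 - c) * u2) := by ring
      rw [← hWe, hsplitc] at e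
      omega
    · -- d = H+Q : impossible
      exfalso
      have e2 : 2 ^ c * (2 ^ (k2 - c) * u2) = 2 ^ c * (u4 + 2 ^ (k1 - c) * u1) := by omega
      have e3 : 2 ^ (k2 - c) * u2 = u4 + 2 ^ (k1 - c) * u1 :=
        Nat.eq_of_mul_eq_mul_left (by positivity) e2
      have := even_pow_mul (u := u2) hck2
      omega
    · -- d > H+Q : use C4.symm
      have h5 : u4 + 2 ^ (k1 - c) * u1 < 2 ^ (k2 - c) * u2 :=
        Nat.lt_of_mul_lt_mul_left (a := 2 ^ c) (by omega)
      have hodd4 : (2 ^ (k2 - c) * u2 - (u4 + 2 ^ (k1 - c) * u1)) % 2 = 1 := by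
        have := even_pow_mul (u := u2) hck2
        omega
      refine mtB C4.symm hodd4 ?_
      have hWe : 2 ^ (k2 - c) * u2
          = (2 ^ (k2 - c) * u2 - (u4 + 2 ^ (k1 - c) * u1)) + (u4 + 2 ^ (k1 - c) * u1) := by
        omega
      have e : 2 ^ c * ((2 ^ (k2 - c) * u2 - (u4 + 2 ^ (k1 - c) * u1)) + (u4 + 2 ^ (k1 - c) * u1))
          = 2 ^ c * (2 ^ (k2 - c) * u2 - (u4 + 2 ^ (k1 - c) * u1))
            + 2 ^ c * (u4 + 2 ^ (k1 - c) * u1) := by ring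
      rw [← hWe, hsplitc] at e
      omega


lemma mt_of_extract {x y l : ℕ} (h : extract w4 x l = extract w4 y l) : Mt x y l := by
  intro j hj
  have h1 : (extract w4 x l)[j]? = (extract w4 y l)[j]? := by rw [h]
  simpa [extract, List.getElem?_map, List.getElem?_range, hj] using h1

theorem w4_avoids : Avoids w4 impFormula := by
  rintro h ⟨hne, hocc⟩
  have hP : 0 < (h 0).length := List.length_pos_iff.mpr (hne 0)
  have hQ : 0 < (h 1).length := List.length_pos_iff.mpr (hne 1)
  have hR : 0 < (h 2).length := List.length_pos_iff.mpr (hne 2)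
  obtain ⟨s1, he1⟩ := hocc [0,1,2,0] (by simp [impFormula])
  obtain ⟨s3, he3⟩ := hocc [0,1,2,1,0] (by simp [impFormula])
  have hi1 : patImage h [0,1,2,0] = h 0 ++ (h 1 ++ (h 2 ++ h 0)) := by
    simp [patImage]
  have hi3 : patImage h [0,1,2,1,0] = h 0 ++ (h 1 ++ (h 2 ++ (h 1 ++ h 0))) := by
    simp [patImage]
  rw [hi1] at he1
  rw [hi3] at he3
  obtain ⟨A1, he1b⟩ := split2' he1 (by simp)
  obtain ⟨A2, he1c⟩ := split2' he1b (by simp)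
  obtain ⟨A3, A4⟩ := split2' he1c (by simp)
  obtain ⟨B1, he3b⟩ := split2' he3 (by simp)
  obtain ⟨B2, he3c⟩ := split2' he3b (by simp)
  obtain ⟨B3, he3d⟩ := split2' he3c (by simp)
  obtain ⟨B4, B5⟩ := split2' he3d (by simp)
  exact core s1 s3 (h 0).length (h 1).length (h 2).length hP hQ hR
    (mt_of_extract (A1.symm.trans A4))
    (mt_of_extract ((glue3 A1 A2 A3).symm.trans (glue3 B1 B2 B3)))
    (mt_of_extract (A2.symm.trans B4))
    (mt_of_extract (A1.symm.trans B5))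



inductive BT where
  | sq (o l : ℕ) : BT
  | oc (A B C : List (Fin 3)) (o1 o2 o3 : ℕ) : BT
  | nd (t0 t1 t2 : BT) : BT

def subEq (v : List (Fin 3)) (o : ℕ) (s : List (Fin 3)) : Bool :=
  decide ((v.drop o).take s.length = s)

def checkSq (v : List (Fin 3)) (o l : ℕ) : Bool :=
  let x := (v.drop o).take l
  decide (x.length = l) && decide (1 ≤ l) && subEq v o (x ++ x)

def checkOc (v A B C : List (Fin 3)) (o1 o2 o3 : ℕ) : Bool :=
  decide (A.length = 1) && decide (1 ≤ B.length) && decide (B.length ≤ 2) &&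
  decide (1 ≤ C.length) && decide (C.length ≤ 3) &&
  subEq v o1 (A++B++C++A) && subEq v o2 (A++C++B++A) && subEq v o3 (A++B++C++B++A)

def chk : BT → List (Fin 3) → Bool
  | .sq o l, acc => checkSq acc.reverse o l
  | .oc A B C o1 o2 o3, acc => checkOc acc.reverse A B C o1 o2 o3
  | .nd t0 t1 t2, acc => chk t0 (0 :: acc) && chk t1 (1 :: acc) && chk t2 (2 :: acc)

def dep : BT → ℕ
  | .sq _ _ => 0
  | .oc _ _ _ _ _ _ => 0
  | .nd a b c => max (dep a) (max (dep b) (dep c)) + 1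

def SqL (v : List (Fin 3)) : Prop := ∀ x : List (Fin 3), x ≠ [] → ¬ (x ++ x) <:+: v

def HasOcc (v : List (Fin 3)) : Prop :=
  ∃ A B C : List (Fin 3), A.length = 1 ∧ 1 ≤ B.length ∧ B.length ≤ 2 ∧ 1 ≤ C.length ∧
    C.length ≤ 3 ∧ (A++B++C++A) <:+: v ∧ (A++C++B++A) <:+: v ∧ (A++B++C++B++A) <:+: v

lemma subEq_infix {v s : List (Fin 3)} {o : ℕ} (h : subEq v o s = true) : s <:+: v := by
  have h2 : (v.drop o).take s.length = s := of_decide_eq_true h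
  rw [← h2]
  exact ((v.drop o).take_prefix s.length).isInfix.trans (v.drop_suffix o).isInfix

lemma checkSq_sound {v : List (Fin 3)} {o l : ℕ} (h : checkSq v o l = true) : ¬ SqL v := by
  intro hsq
  simp only [checkSq, Bool.and_eq_true, decide_eq_true_eq] at h
  obtain ⟨⟨hxl, hl⟩, hsub⟩ := h
  refine hsq _ ?_ (subEq_infix hsub)
  intro hnil
  rw [hnil] at hxl
  simp at hxl
  omega

lemma checkOc_sound {v A B C : List (Fin 3)} {o1 o2 o3 : ℕ}
    (h : checkOc v A B C o1 o2 o3 = true) : HasOcc v := by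
  simp only [checkOc, Bool.and_eq_true, decide_eq_true_eq] at h
  obtain ⟨⟨⟨⟨⟨⟨⟨hA, hB1⟩, hB2⟩, hC1⟩, hC2⟩, h1⟩, h2⟩, h3⟩ := h
  exact ⟨A, B, C, hA, hB1, hB2, hC1, hC2, subEq_infix h1, subEq_infix h2, subEq_infix h3⟩

lemma hasOcc_mono {s t : List (Fin 3)} (hst : s <:+: t) : HasOcc s → HasOcc t := by
  rintro ⟨A, B, C, h1, h2, h3, h4, h5, i1, i2, i3⟩
  exact ⟨A, B, C, h1, h2, h3, h4, h5, i1.trans hst, i2.trans hst, i3.trans hst⟩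

lemma sqL_mono {s t : List (Fin 3)} (hst : s <:+: t) : SqL t → SqL s :=
  fun h x hx hinf => h x hx (hinf.trans hst)

lemma walk : ∀ (t : BT) (acc rest : List (Fin 3)),
    chk t acc = true → dep t ≤ rest.length →
    SqL (acc.reverse ++ rest) → ¬ HasOcc (acc.reverse ++ rest) → False := by
  intro t
  induction t with
  | sq o l =>
    intro acc rest hc _ hsq _
    exact checkSq_sound hc (sqL_mono ⟨[], rest, by simp⟩ hsq)
  | oc A B C o1 o2 o3 =>
    intro acc rest hc _ _ hno
    exact hno (hasOcc_mono ⟨[], rest, by simp⟩ (checkOc_sound hc))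
  | nd t0 t1 t2 ih0 ih1 ih2 =>
    intro acc rest hc hd hsq hno
    match rest with
    | [] => simp [dep] at hd
    | c :: rest' =>
      simp only [chk, Bool.and_eq_true] at hc
      have hre : acc.reverse ++ (c :: rest') = (c :: acc).reverse ++ rest' := by simp
      rw [hre] at hsq hno
      simp only [dep, List.length_cons] at hd
      fin_cases c
      · exact ih0 (0 :: acc) rest' hc.1.1 (by omega) hsq hno
      · exact ih1 (1 :: acc) rest' hc.1.2 (by omega) hsq hno
      · exact ih2 (2 :: acc) rest' hc.2 (by omega) hsq hno

def pmap (a b : Fin 3) : Fin 3 → Fin 3 := fun x => if x = a then 0 else if x = b then 1 else 2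
def pinv (a b : Fin 3) : Fin 3 → Fin 3 := fun y =>
  if y = 0 then a else if y = 1 then b
  else (if a ≠ 0 ∧ b ≠ 0 then 0 else if a ≠ 1 ∧ b ≠ 1 then 1 else 2)

lemma pinv_pmap : ∀ a b : Fin 3, a ≠ b → ∀ x, pinv a b (pmap a b x) = x := by decide

theorem occ48 (T : BT) (hT : chk T [1,0] = true) (hTd : dep T ≤ 46)
    (v : List (Fin 3)) (hvl : v.length = 48) (hsq : SqL v) : HasOcc v := by
  by_contra hno
  match v, hvl, hsq, hno with
  | a :: b :: rest, hvl, hsq, hno =>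
  have hab : a ≠ b := by
    rintro rfl
    exact hsq [a] (by simp) ⟨[], rest, by simp⟩
  have hba : b ≠ a := hab.symm
  have hgf : ∀ x, pinv a b (pmap a b x) = x := pinv_pmap a b hab
  have hmapinv : ∀ u : List (Fin 3), (u.map (pmap a b)).map (pinv a b) = u := by
    intro u
    induction u with
    | nil => rfl
    | cons hd tl ih => simp [hgf, ih]
  have hfa : pmap a b a = 0 := by simp [pmap]
  have hfb : pmap a b b = 1 := by simp [pmap, hba]
  have hsq' : SqL ((a :: b :: rest).map (pmap a b)) := by
    intro x hx hinf
    have h2 := hinf.map (pinv a b)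
    rw [List.map_append, hmapinv] at h2
    exact hsq _ (by simpa using hx) h2
  have hno' : ¬ HasOcc ((a :: b :: rest).map (pmap a b)) := by
    rintro ⟨A, B, C, h1, h2, h3, h4, h5, i1, i2, i3⟩
    refine hno ⟨A.map (pinv a b), B.map (pinv a b), C.map (pinv a b),
      by simpa using h1, by simpa using h2, by simpa using h3,
      by simpa using h4, by simpa using h5, ?_, ?_, ?_⟩
    · have := i1.map (pinv a b)
      rw [List.map_append, List.map_append, List.map_append, hmapinv] at this
      exact this
    · have := i2.map (pinv a b)
      rw [List.map_append, List.map_append, List.map_append, hmapinv] at this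
      exact this
    · have := i3.map (pinv a b)
      rw [List.map_append, List.map_append, List.map_append, List.map_append, hmapinv] at this
      exact this
  have hlen : (rest.map (pmap a b)).length = 46 := by
    simp only [List.length_cons] at hvl
    simp; omega
  have hshape : ((a :: b :: rest).map (pmap a b))
      = ([1, 0] : List (Fin 3)).reverse ++ rest.map (pmap a b) := by
    simp [hfa, hfb]
  rw [hshape] at hsq' hno'
  exact walk T [1,0] (rest.map (pmap a b)) hT (by rw [hlen]; exact hTd) hsq' hno'


def bigT : BT :=
(.nd (.nd (.sq 2 1) (.sq 0 2) (.nd (.nd (.sq 4 1) (.nd (.nd (.sq 6 1) (.sq 4 2) (.sq 0 4)) (.sq 5 1) (.nd (.nd (.sq 7 1) (.sq 3 3) (.nd (.sq 6 2) (.nd (.nd (.sq 10 1) (.nd (.sq 9 2) (.sq 11 1) (.nd (.nd (.sq 13 1) (.nd (.nd (.sq 15 1) (.sq 13 2) (.nd (.nd (.sq 17 1) (.nd (.sq 12 4) (.sq 18 1) (.nd (.nd (.sq 20 1) (.sq 16 3) (.nd (.sq 19 2) (.nd (.nd (.sq 23 1) (.nd (.sq 22 2) (.sq 24 1) (.sq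 0 13)) (.oc [2] [0] [1] 3 21 12)) (.sq 22 1) (.nd (.oc [0] [2] [1] 7 4 20) (.sq 21 2) (.sq 23 1))) (.sq 21 1))) (.nd (.oc [0] [1] [2] 4 7 17) (.sq 20 1) (.sq 18 2)) (.sq 19 1))) (.sq 15 2)) (.oc [1] [0] [2] 14 11 1) (.sq 16 1))) (.sq 14 1) (.sq 10 3)) (.nd (.sq 12 2) (.sq 4 6) (.sq 14 1))) (.nd (.oc [0] [1] [2] 4 7 10) (.sq 13 1) (.sq 11 2)) (.sq 12 1))) (.nd (.nd (.sq 12 1) (.nd (.nd (.sq 14 1) (.sq 12 2) (.oc [2] [0] [1] 3 8 11)) (.sq 13 1) (.nd (.nd (.sq 15 1) (.sq 11 3) (.sq 1 8)) (.nd (.oc [0] [1] [2] 4 7 12) (.sq 15 1) (.sq 13 2)) (.sq 14 1))) (.sq 10 2)) (.sq 7 3) (.sq 11 1))) (.sq 9 1) (.nd (.nd (.sq 11 1) (.nd (.nd (.sq 13 1) (.sq 11 2) (.nd (.nd (.sq 15 1) (.nd (.sq 10 4) (.sq 16 1) (.nd (.nd (.sq 18 1) (.sq 14 3) (.nd (.sq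 17 2) (.nd (.oc [0] [2] [1] 18 4 7) (.sq 20 1) (.sq 0 11)) (.sq 19 1))) (.nd (.nd (.sq 19 1) (.nd (.sq 18 2) (.sq 20 1) (.nd (.nd (.sq 22 1) (.nd (.nd (.sq 24 1) (.sq 22 2) (.nd (.nd (.sq 26 1) (.nd (.sq 21 4) (.sq 27 1) (.nd (.nd (.sq 29 1) (.sq 25 3) (.nd (.sq 28 2) (.nd (.oc [0] [1] [2] 4 29 15) (.sq 31 1) (.nd (.nd (.sq 33 1) (.nd (.nd (.sq 35 1) (.sq 33 2) (.nd (.nd (.sq 37 1) (.nd (.sq 32 4) (.sq 38 1) (.nd (.nd (.sq 40 1) (.sq 36 3) (.sq 20 11)) (.nd (.nd (.sq 41 1) (.nd (.sq 40 2) (.sq 42 1) (.sq 0 22)) (.oc [2] [0] [1] 3 39 10)) (.sq 40 1) (.sq 38 2)) (.sq 39 1))) (.sq 35 2)) (.oc [1] [0] [2] 34 9 1) (.sq 36 1))) (.sq 34 1) (.nd (.sq 31 3) (.nd (.oc [0] [2,1] [2,0,1] 7 13 29) (.sq 36 1) (.sq 34 2)) (.sq 35 1))) (.sq 27 4)) (.sq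 30 2) (.sq 32 1))) (.sq 30 1))) (.nd (.sq 9 11) (.sq 29 1) (.sq 27 2)) (.sq 28 1))) (.sq 24 2)) (.oc [1] [0] [2] 23 9 1) (.sq 25 1))) (.sq 23 1) (.sq 19 3)) (.nd (.sq 21 2) (.oc [1] [0,2] [0,1,2] 12 18 1) (.sq 23 1))) (.sq 15 4) (.sq 21 1))) (.oc [2] [0] [1] 3 17 10)) (.sq 18 1) (.sq 16 2)) (.sq 17 1))) (.sq 13 2)) (.oc [1] [0] [2] 12 9 1) (.sq 14 1))) (.sq 12 1) (.nd (.sq 9 3) (.nd (.nd (.sq 15 1) (.nd (.sq 14 2) (.sq 16 1) (.nd (.nd (.sq 18 1) (.nd (.nd (.sq 20 1) (.sq 18 2) (.nd (.nd (.sq 22 1) (.nd (.sq 17 4) (.sq 23 1) (.nd (.nd (.sq 25 1) (.sq 21 3) (.nd (.sq 24 2) (.nd (.oc [0] [1] [2] 4 25 11) (.sq 27 1) (.nd (.nd (.sq 29 1) (.nd (.nd (.sq 31 1) (.sq 29 2) (.nd (.nd (.sq 33 1) (.nd (.sq 28 4) (.sq 34 1) (.nd (.nd (.sq 36 1) (.sq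 32 3) (.sq 16 11)) (.nd (.oc [0] [2,1] [2,0,1] 25 31 7) (.sq 36 1) (.sq 34 2)) (.sq 35 1))) (.sq 31 2)) (.oc [1] [0] [2] 30 9 1) (.sq 32 1))) (.sq 30 1) (.nd (.sq 27 3) (.nd (.nd (.sq 33 1) (.nd (.sq 32 2) (.sq 34 1) (.sq 0 18)) (.oc [2] [0] [1] 3 31 17)) (.sq 32 1) (.sq 30 2)) (.sq 31 1))) (.sq 23 4)) (.sq 26 2) (.sq 28 1))) (.sq 26 1))) (.nd (.nd (.sq 26 1) (.nd (.sq 25 2) (.sq 27 1) (.nd (.nd (.sq 29 1) (.nd (.sq 10 11) (.sq 30 1) (.sq 26 3)) (.nd (.sq 28 2) (.oc [1] [0,2] [0,1,2] 19 25 1) (.sq 30 1))) (.sq 22 4) (.sq 28 1))) (.oc [2] [0] [1] 3 24 17)) (.sq 25 1) (.sq 23 2)) (.sq 24 1))) (.sq 20 2)) (.oc [1] [0] [2] 19 9 1) (.sq 21 1))) (.sq 19 1) (.sq 15 3)) (.nd (.sq 17 2) (.nd (.oc [0] [1] [2] 4 18 11) (.sq 20 1) (.nd (.nd (.sq 22 1)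 (.nd (.nd (.sq 24 1) (.sq 22 2) (.nd (.nd (.sq 26 1) (.nd (.sq 21 4) (.sq 27 1) (.nd (.nd (.sq 29 1) (.sq 25 3) (.nd (.sq 28 2) (.nd (.oc [0] [1] [2] 4 29 11) (.sq 31 1) (.nd (.nd (.sq 33 1) (.nd (.nd (.sq 35 1) (.sq 33 2) (.sq 15 11)) (.sq 34 1) (.nd (.sq 31 3) (.nd (.nd (.sq 37 1) (.nd (.sq 36 2) (.sq 38 1) (.nd (.nd (.sq 40 1) (.nd (.nd (.sq 42 1) (.sq 40 2) (.oc [2] [1,0] [1,2,0] 13 19 35)) (.sq 41 1) (.sq 37 3)) (.nd (.sq 39 2) (.nd (.oc [0] [1] [2] 4 40 11) (.sq 42 1) (.sq 0 22)) (.sq 41 1))) (.sq 33 4) (.sq 39 1))) (.oc [2] [0] [1] 3 35 21)) (.sq 36 1) (.sq 34 2)) (.sq 35 1))) (.sq 27 4)) (.sq 30 2) (.sq 32 1))) (.sq 30 1))) (.oc [1] [0,2] [0,1,2] 23 14 1) (.sq 28 1))) (.sq 24 2)) (.oc [1] [0] [2] 23 9 1) (.sq 25 1))) (.sq 23 1)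 (.nd (.sq 20 3) (.sq 4 11) (.sq 24 1))) (.sq 16 4)) (.sq 19 2) (.sq 21 1))) (.sq 19 1))) (.sq 11 4) (.sq 17 1))) (.nd (.nd (.sq 17 1) (.nd (.nd (.sq 19 1) (.sq 17 2) (.oc [2] [0] [1] 3 13 16)) (.sq 18 1) (.nd (.nd (.sq 20 1) (.sq 16 3) (.nd (.sq 19 2) (.nd (.oc [0] [1] [2] 4 20 11) (.sq 22 1) (.nd (.nd (.sq 24 1) (.nd (.nd (.sq 26 1) (.sq 24 2) (.oc [2] [0] [1] 3 13 23)) (.sq 25 1) (.sq 1 13)) (.sq 18 4)) (.sq 21 2) (.sq 23 1))) (.sq 21 1))) (.nd (.sq 10 6) (.sq 20 1) (.sq 18 2)) (.sq 19 1))) (.sq 15 2)) (.oc [1] [0] [2] 14 9 1) (.sq 16 1))) (.sq 14 1) (.sq 12 2)) (.sq 13 1))) (.sq 5 4)) (.sq 8 2) (.sq 10 1))) (.sq 8 1))) (.nd (.nd (.sq 8 1) (.nd (.sq 7 2) (.sq 9 1) (.nd (.nd (.sq 11 1) (.nd (.nd (.sq 13 1) (.sq 11 2) (.nd (.nd (.sq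 15 1) (.nd (.sq 10 4) (.sq 16 1) (.nd (.nd (.sq 18 1) (.sq 14 3) (.nd (.sq 17 2) (.nd (.oc [0] [1] [2] 8 18 4) (.sq 20 1) (.nd (.nd (.sq 22 1) (.nd (.nd (.sq 24 1) (.sq 22 2) (.nd (.nd (.sq 26 1) (.nd (.sq 21 4) (.sq 27 1) (.nd (.nd (.sq 29 1) (.sq 25 3) (.sq 9 11)) (.nd (.nd (.sq 30 1) (.nd (.sq 29 2) (.sq 31 1) (.nd (.nd (.sq 33 1) (.nd (.nd (.sq 35 1) (.sq 33 2) (.nd (.nd (.sq 37 1) (.nd (.sq 32 4) (.sq 38 1) (.nd (.nd (.sq 40 1) (.sq 36 3) (.nd (.sq 39 2) (.nd (.oc [0] [1] [2] 8 40 4) (.sq 42 1) (.sq 0 22)) (.sq 41 1))) (.nd (.sq 20 11) (.sq 40 1) (.sq 38 2)) (.sq 39 1))) (.sq 35 2)) (.oc [1] [0] [2] 34 9 1) (.sq 36 1))) (.sq 34 1) (.sq 30 3)) (.oc [2] [1,0] [1,2,0] 28 19 6)) (.sq 26 4) (.sq 32 1))) (.oc [2] [0] [1] 3 28 10)) (.sq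 29 1) (.sq 27 2)) (.sq 28 1))) (.sq 24 2)) (.oc [1] [0] [2] 23 9 1) (.sq 25 1))) (.sq 23 1) (.nd (.sq 20 3) (.nd (.nd (.sq 26 1) (.nd (.sq 25 2) (.sq 27 1) (.nd (.nd (.sq 29 1) (.nd (.nd (.sq 31 1) (.sq 29 2) (.nd (.nd (.sq 33 1) (.nd (.sq 28 4) (.sq 34 1) (.nd (.nd (.sq 36 1) (.sq 32 3) (.nd (.sq 35 2) (.sq 3 18) (.sq 37 1))) (.nd (.nd (.sq 37 1) (.nd (.sq 36 2) (.sq 38 1) (.nd (.nd (.sq 40 1) (.nd (.sq 21 11) (.sq 41 1) (.sq 37 3)) (.nd (.sq 39 2) (.oc [1] [0,2] [0,1,2] 1 36 12) (.sq 41 1))) (.sq 33 4) (.sq 39 1))) (.oc [2] [0] [1] 3 35 10)) (.sq 36 1) (.sq 34 2)) (.sq 35 1))) (.sq 31 2)) (.oc [1] [0] [2] 30 9 1) (.sq 32 1))) (.sq 30 1) (.sq 26 3)) (.nd (.sq 28 2) (.oc [1] [0,2] [0,1,2] 1 25 12) (.sq 30 1))) (.sq 22 4) (.sq 28 1))) (.oc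 [2] [0] [1] 3 24 10)) (.sq 25 1) (.sq 23 2)) (.sq 24 1))) (.sq 16 4)) (.sq 19 2) (.sq 21 1))) (.sq 19 1))) (.nd (.nd (.sq 19 1) (.nd (.sq 18 2) (.sq 20 1) (.sq 0 11)) (.oc [2] [0] [1] 3 17 10)) (.sq 18 1) (.sq 16 2)) (.sq 17 1))) (.sq 13 2)) (.oc [1] [0] [2] 12 9 1) (.sq 14 1))) (.sq 12 1) (.sq 8 3)) (.nd (.sq 10 2) (.nd (.oc [0] [1] [2] 8 11 4) (.sq 13 1) (.nd (.nd (.sq 15 1) (.nd (.nd (.sq 17 1) (.sq 15 2) (.nd (.nd (.sq 19 1) (.nd (.sq 14 4) (.sq 20 1) (.nd (.nd (.sq 22 1) (.sq 18 3) (.nd (.sq 21 2) (.oc [1] [0,2] [0,1,2] 1 7 16) (.sq 23 1))) (.nd (.nd (.sq 23 1) (.nd (.sq 22 2) (.sq 24 1) (.nd (.nd (.sq 26 1) (.nd (.nd (.sq 28 1) (.sq 26 2) (.oc [2] [1,0] [1,2,0] 6 12 21)) (.sq 27 1) (.sq 23 3)) (.nd (.sq 25 2) (.nd (.oc [0] [1]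 [2] 8 26 4) (.sq 28 1) (.sq 0 15)) (.sq 27 1))) (.sq 19 4) (.sq 25 1))) (.oc [2] [0] [1] 3 21 14)) (.sq 22 1) (.sq 20 2)) (.sq 21 1))) (.sq 17 2)) (.oc [1] [0] [2] 16 13 1) (.sq 18 1))) (.sq 16 1) (.nd (.sq 13 3) (.nd (.nd (.sq 19 1) (.nd (.sq 18 2) (.sq 20 1) (.nd (.nd (.sq 22 1) (.nd (.nd (.sq 24 1) (.sq 22 2) (.nd (.nd (.sq 26 1) (.nd (.sq 21 4) (.sq 27 1) (.nd (.nd (.sq 29 1) (.sq 25 3) (.nd (.sq 28 2) (.oc [1] [0,2] [0,1,2] 1 7 23) (.sq 30 1))) (.nd (.nd (.sq 30 1) (.nd (.sq 29 2) (.sq 31 1) (.nd (.nd (.sq 33 1) (.nd (.sq 14 11) (.sq 34 1) (.sq 30 3)) (.nd (.sq 32 2) (.nd (.oc [0] [1] [2] 8 33 4) (.sq 35 1) (.nd (.nd (.sq 37 1) (.nd (.oc [0] [2,1] [2,0,1] 33 2 11) (.sq 38 1) (.nd (.sq 35 3) (.nd (.nd (.sq 41 1) (.nd (.sq 40 2)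 (.sq 42 1) (.sq 0 22)) (.oc [2] [0] [1] 3 39 21)) (.sq 40 1) (.sq 38 2)) (.sq 39 1))) (.sq 31 4)) (.sq 34 2) (.sq 36 1))) (.sq 34 1))) (.sq 26 4) (.sq 32 1))) (.oc [2] [0] [1] 3 28 21)) (.sq 29 1) (.sq 27 2)) (.sq 28 1))) (.sq 24 2)) (.oc [1] [0] [2] 23 13 1) (.sq 25 1))) (.sq 23 1) (.sq 19 3)) (.nd (.sq 21 2) (.sq 3 11) (.sq 23 1))) (.sq 15 4) (.sq 21 1))) (.oc [2] [1] [0] 17 3 6)) (.sq 18 1) (.sq 16 2)) (.sq 17 1))) (.sq 9 4)) (.sq 12 2) (.sq 14 1))) (.sq 12 1))) (.sq 4 4) (.sq 10 1))) (.nd (.nd (.sq 10 1) (.nd (.nd (.sq 12 1) (.sq 10 2) (.oc [2] [0] [1] 3 6 9)) (.sq 11 1) (.sq 1 6)) (.sq 8 2)) (.nd (.sq 6 3) (.sq 10 1) (.nd (.nd (.sq 12 1) (.oc [1] [0] [2] 7 10 1) (.nd (.sq 11 2) (.nd (.nd (.sq 15 1) (.nd (.sq 14 2) (.sq 16 1)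 (.oc [2] [1] [0] 6 3 13)) (.nd (.nd (.sq 17 1) (.nd (.nd (.sq 19 1) (.sq 17 2) (.oc [2] [0] [1] 3 6 16)) (.sq 18 1) (.nd (.oc [0] [1] [2] 17 12 4) (.nd (.nd (.sq 21 1) (.nd (.sq 20 2) (.sq 22 1) (.oc [2] [1] [0] 6 3 19)) (.nd (.nd (.sq 23 1) (.sq 13 6) (.sq 21 2)) (.nd (.sq 19 3) (.sq 23 1) (.nd (.nd (.sq 25 1) (.oc [1] [0] [2] 7 23 1) (.sq 1 13)) (.sq 22 2) (.sq 24 1))) (.sq 22 1))) (.sq 20 1) (.sq 18 2)) (.sq 19 1))) (.sq 15 2)) (.sq 12 3) (.sq 16 1))) (.sq 14 1) (.sq 8 4)) (.sq 13 1))) (.sq 9 2) (.sq 11 1))) (.sq 9 1))) (.sq 7 1) (.sq 5 2)) (.sq 6 1))) (.sq 2 2)) (.nd (.nd (.sq 5 1) (.nd (.sq 4 2) (.sq 6 1) (.nd (.nd (.sq 8 1) (.nd (.nd (.sq 10 1) (.sq 8 2) (.nd (.nd (.sq 12 1) (.oc [1] [0] [2] 1 6 9) (.sq 10 2)) (.nd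 (.nd (.sq 13 1) (.nd (.sq 12 2) (.sq 14 1) (.sq 0 8)) (.sq 9 3)) (.sq 12 1) (.nd (.oc [0] [2] [1] 2 5 10) (.sq 11 2) (.sq 13 1))) (.sq 11 1))) (.sq 9 1) (.sq 5 3)) (.nd (.sq 7 2) (.nd (.nd (.sq 11 1) (.nd (.sq 10 2) (.sq 12 1) (.sq 2 6)) (.nd (.nd (.sq 13 1) (.nd (.nd (.sq 15 1) (.sq 13 2) (.nd (.sq 10 4) (.nd (.nd (.sq 18 1) (.nd (.sq 17 2) (.sq 19 1) (.nd (.nd (.sq 21 1) (.oc [1] [0] [2] 1 19 10) (.nd (.sq 20 2) (.nd (.nd (.sq 24 1) (.nd (.sq 23 2) (.sq 25 1) (.sq 15 6)) (.sq 0 13)) (.sq 23 1) (.nd (.oc [0] [2] [1] 2 5 21) (.sq 22 2) (.sq 24 1))) (.sq 22 1))) (.nd (.oc [0] [1] [2] 5 2 18) (.sq 21 1) (.sq 19 2)) (.sq 20 1))) (.sq 14 3)) (.sq 17 1) (.nd (.oc [0] [2] [1] 2 5 15) (.sq 16 2) (.sq 18 1))) (.sq 16 1))) (.sq 14 1) (.oc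 [2] [1] [0] 9 12 3)) (.sq 11 2)) (.sq 8 3) (.sq 12 1))) (.sq 10 1) (.nd (.oc [0] [2] [1] 2 5 8) (.sq 9 2) (.sq 11 1))) (.sq 9 1))) (.nd (.nd (.sq 9 1) (.sq 3 4) (.nd (.nd (.sq 11 1) (.nd (.nd (.sq 13 1) (.sq 11 2) (.nd (.sq 8 4) (.nd (.nd (.sq 16 1) (.nd (.sq 15 2) (.sq 17 1) (.nd (.oc [0] [1] [2] 16 2 5) (.nd (.nd (.sq 20 1) (.sq 14 4) (.sq 0 11)) (.sq 19 1) (.sq 17 2)) (.sq 18 1))) (.sq 12 3)) (.sq 15 1) (.nd (.nd (.sq 17 1) (.oc [1] [0] [2] 1 15 8) (.nd (.sq 16 2) (.nd (.nd (.sq 20 1) (.nd (.sq 19 2) (.sq 21 1) (.nd (.oc [0] [1] [2] 20 2 5) (.nd (.nd (.sq 24 1) (.sq 18 4) (.nd (.nd (.sq 26 1) (.nd (.nd (.sq 28 1) (.sq 26 2) (.nd (.sq 23 4) (.nd (.nd (.sq 31 1) (.nd (.sq 30 2) (.sq 32 1) (.oc [2] [0,1] [0,2,1] 10 16 25)) (.sq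 27 3)) (.sq 30 1) (.sq 2 15)) (.sq 29 1))) (.sq 27 1) (.oc [2] [0] [1] 25 7 10)) (.sq 24 2)) (.nd (.sq 22 3) (.sq 26 1) (.nd (.oc [0] [1,2] [1,0,2] 5 11 20) (.sq 25 2) (.sq 27 1))) (.sq 25 1))) (.sq 23 1) (.sq 21 2)) (.sq 22 1))) (.nd (.nd (.sq 22 1) (.nd (.nd (.sq 24 1) (.sq 22 2) (.nd (.sq 19 4) (.nd (.nd (.sq 27 1) (.nd (.sq 26 2) (.sq 28 1) (.nd (.oc [0] [1] [2] 27 2 5) (.nd (.nd (.sq 31 1) (.sq 25 4) (.nd (.nd (.sq 33 1) (.nd (.nd (.sq 35 1) (.sq 33 2) (.nd (.sq 30 4) (.nd (.nd (.sq 38 1) (.sq 18 11) (.sq 34 3)) (.sq 37 1) (.nd (.nd (.sq 39 1) (.oc [1] [0] [2] 1 37 8) (.nd (.sq 38 2) (.nd (.nd (.sq 42 1) (.oc [1] [2,0] [2,1,0] 37 6 15) (.sq 0 22)) (.sq 41 1) (.sq 35 4)) (.sq 40 1))) (.sq 36 2) (.sq 38 1))) (.sq 36 1))) (.sq 34 1)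 (.oc [2] [0] [1] 32 7 10)) (.sq 31 2)) (.nd (.sq 29 3) (.sq 33 1) (.nd (.oc [0] [1,2] [1,0,2] 5 11 27) (.sq 32 2) (.sq 34 1))) (.sq 32 1))) (.sq 30 1) (.sq 28 2)) (.sq 29 1))) (.sq 23 3)) (.sq 26 1) (.nd (.sq 7 11) (.sq 25 2) (.sq 27 1))) (.sq 25 1))) (.sq 23 1) (.oc [2] [0] [1] 21 7 10)) (.sq 20 2)) (.sq 17 3) (.sq 21 1))) (.sq 19 1) (.sq 13 4)) (.sq 18 1))) (.sq 14 2) (.sq 16 1))) (.sq 14 1))) (.sq 12 1) (.oc [2] [1] [0] 7 10 3)) (.sq 9 2)) (.nd (.sq 7 3) (.sq 11 1) (.nd (.nd (.sq 13 1) (.nd (.nd (.sq 15 1) (.sq 13 2) (.nd (.nd (.sq 17 1) (.oc [1] [0] [2] 1 11 14) (.sq 15 2)) (.nd (.nd (.sq 18 1) (.nd (.sq 17 2) (.sq 19 1) (.nd (.oc [0] [1] [2] 18 2 5) (.nd (.nd (.sq 22 1) (.sq 16 4) (.nd (.nd (.sq 24 1) (.oc [1] [0] [2] 1 11 21) (.sq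 22 2)) (.nd (.sq 20 3) (.sq 24 1) (.sq 0 13)) (.sq 23 1))) (.sq 21 1) (.sq 19 2)) (.sq 20 1))) (.sq 14 3)) (.sq 17 1) (.nd (.sq 8 6) (.sq 16 2) (.sq 18 1))) (.sq 16 1))) (.sq 14 1) (.oc [2] [1] [0] 7 12 3)) (.nd (.sq 12 2) (.nd (.nd (.sq 16 1) (.nd (.sq 15 2) (.sq 17 1) (.nd (.oc [0] [1] [2] 16 2 5) (.nd (.nd (.sq 20 1) (.sq 14 4) (.nd (.nd (.sq 22 1) (.nd (.nd (.sq 24 1) (.sq 22 2) (.nd (.sq 19 4) (.nd (.nd (.sq 27 1) (.nd (.sq 26 2) (.sq 28 1) (.nd (.oc [0] [1] [2] 27 2 5) (.nd (.nd (.sq 31 1) (.sq 25 4) (.nd (.nd (.sq 33 1) (.sq 13 11) (.sq 31 2)) (.nd (.sq 29 3) (.sq 33 1) (.nd (.nd (.sq 35 1) (.oc [1] [0] [2] 1 33 19) (.nd (.sq 34 2) (.nd (.nd (.sq 38 1) (.nd (.sq 37 2) (.sq 39 1) (.nd (.oc [0] [1] [2] 38 2 5) (.nd (.nd (.sq 42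 1) (.sq 36 4) (.sq 0 22)) (.sq 41 1) (.sq 39 2)) (.sq 40 1))) (.nd (.nd (.sq 40 1) (.oc [1] [2,0] [2,1,0] 11 17 33) (.sq 38 2)) (.sq 35 3) (.sq 39 1))) (.sq 37 1) (.sq 31 4)) (.sq 36 1))) (.sq 32 2) (.sq 34 1))) (.sq 32 1))) (.sq 30 1) (.sq 28 2)) (.sq 29 1))) (.sq 23 3)) (.sq 26 1) (.nd (.oc [0] [1,2] [1,0,2] 16 22 5) (.sq 25 2) (.sq 27 1))) (.sq 25 1))) (.sq 23 1) (.oc [2] [1] [0] 7 21 3)) (.sq 20 2)) (.nd (.sq 18 3) (.sq 22 1) (.sq 2 11)) (.sq 21 1))) (.sq 19 1) (.sq 17 2)) (.sq 18 1))) (.nd (.nd (.sq 18 1) (.nd (.nd (.sq 20 1) (.sq 18 2) (.nd (.sq 15 4) (.nd (.nd (.sq 23 1) (.nd (.sq 22 2) (.sq 24 1) (.nd (.oc [0] [1] [2] 23 2 5) (.nd (.nd (.sq 27 1) (.sq 21 4) (.nd (.nd (.sq 29 1) (.nd (.nd (.sq 31 1) (.sq 29 2) (.nd (.sq 26 4)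 (.nd (.nd (.sq 34 1) (.sq 14 11) (.sq 30 3)) (.sq 33 1) (.nd (.oc [0] [1,2] [1,0,2] 23 29 5) (.sq 32 2) (.sq 34 1))) (.sq 32 1))) (.sq 30 1) (.oc [2] [0] [1] 28 7 17)) (.sq 27 2)) (.nd (.sq 25 3) (.sq 29 1) (.nd (.nd (.sq 31 1) (.oc [1] [0] [2] 1 29 15) (.nd (.sq 30 2) (.nd (.nd (.sq 34 1) (.nd (.sq 33 2) (.sq 35 1) (.nd (.oc [0] [1] [2] 34 2 5) (.nd (.nd (.sq 38 1) (.sq 32 4) (.nd (.nd (.sq 40 1) (.oc [1] [2,0] [2,1,0] 29 35 11) (.sq 38 2)) (.nd (.sq 36 3) (.sq 40 1) (.sq 20 11)) (.sq 39 1))) (.sq 37 1) (.sq 35 2)) (.sq 36 1))) (.sq 0 18)) (.sq 33 1) (.sq 27 4)) (.sq 32 1))) (.sq 28 2) (.sq 30 1))) (.sq 28 1))) (.sq 26 1) (.sq 24 2)) (.sq 25 1))) (.sq 19 3)) (.sq 22 1) (.nd (.nd (.sq 24 1) (.oc [1] [0] [2] 1 22 15) (.nd (.sq 23 2) (.nd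 (.nd (.sq 27 1) (.nd (.sq 26 2) (.sq 28 1) (.nd (.oc [0] [1] [2] 27 2 5) (.nd (.nd (.sq 31 1) (.sq 25 4) (.nd (.oc [0] [1,2] [1,0,2] 27 18 5) (.nd (.sq 29 3) (.sq 33 1) (.nd (.nd (.sq 35 1) (.oc [1] [0] [2] 1 33 15) (.nd (.sq 34 2) (.nd (.nd (.sq 38 1) (.nd (.sq 37 2) (.sq 39 1) (.sq 19 11)) (.nd (.nd (.sq 40 1) (.nd (.nd (.sq 42 1) (.sq 40 2) (.nd (.sq 37 4) (.nd (.nd (.sq 45 1) (.nd (.sq 44 2) (.sq 46 1) (.oc [2] [0,1] [0,2,1] 17 23 39)) (.sq 41 3)) (.sq 44 1) (.sq 2 22)) (.sq 43 1))) (.sq 41 1) (.oc [2] [0] [1] 39 7 17)) (.sq 38 2)) (.sq 35 3) (.sq 39 1))) (.sq 37 1) (.sq 31 4)) (.sq 36 1))) (.sq 32 2) (.sq 34 1))) (.sq 32 1))) (.sq 30 1) (.sq 28 2)) (.sq 29 1))) (.nd (.sq 8 11) (.sq 24 3) (.sq 28 1))) (.sq 26 1) (.sq 20 4)) (.sq 25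 1))) (.sq 21 2) (.sq 23 1))) (.sq 21 1))) (.sq 19 1) (.oc [2] [1] [0] 7 17 3)) (.sq 16 2)) (.sq 13 3) (.sq 17 1))) (.sq 15 1) (.sq 9 4)) (.sq 14 1))) (.sq 10 2) (.sq 12 1))) (.sq 10 1))) (.sq 8 1) (.sq 6 2)) (.sq 7 1))) (.sq 1 3)) (.sq 4 1) (.nd (.nd (.sq 6 1) (.nd (.nd (.sq 8 1) (.sq 6 2) (.nd (.nd (.sq 10 1) (.oc [1] [0] [2] 1 4 7) (.sq 8 2)) (.nd (.nd (.sq 11 1) (.nd (.sq 10 2) (.sq 12 1) (.nd (.oc [0] [2] [1] 8 11 2) (.nd (.nd (.sq 15 1) (.sq 9 4) (.nd (.nd (.sq 17 1) (.oc [1] [0] [2] 1 4 14) (.sq 15 2)) (.nd (.sq 13 3) (.sq 17 1) (.nd (.nd (.sq 19 1) (.nd (.nd (.sq 21 1) (.sq 19 2) (.nd (.nd (.sq 23 1) (.oc [1] [0] [2] 1 4 20) (.sq 21 2)) (.nd (.nd (.sq 24 1) (.nd (.sq 23 2) (.sq 25 1) (.sq 1 13)) (.sq 20 3)) (.sq 23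 1) (.nd (.sq 14 6) (.sq 22 2) (.sq 24 1))) (.sq 22 1))) (.sq 20 1) (.oc [2] [0] [1] 18 13 5)) (.nd (.sq 18 2) (.oc [1] [2] [0] 4 1 17) (.sq 20 1))) (.sq 16 2) (.sq 18 1))) (.sq 16 1))) (.sq 14 1) (.sq 12 2)) (.sq 13 1))) (.sq 7 3)) (.sq 10 1) (.sq 0 6)) (.sq 9 1))) (.sq 7 1) (.nd (.sq 4 3) (.nd (.nd (.sq 10 1) (.nd (.sq 9 2) (.sq 11 1) (.nd (.nd (.sq 13 1) (.nd (.nd (.sq 15 1) (.sq 13 2) (.nd (.nd (.sq 17 1) (.oc [1] [0] [2] 1 4 14) (.sq 15 2)) (.nd (.oc [0] [1] [2] 10 15 6) (.sq 17 1) (.nd (.nd (.sq 19 1) (.nd (.nd (.sq 21 1) (.sq 19 2) (.sq 11 6)) (.sq 20 1) (.nd (.sq 17 3) (.nd (.nd (.sq 23 1) (.nd (.sq 22 2) (.sq 24 1) (.sq 0 13)) (.oc [2] [0] [1] 5 21 12)) (.sq 22 1) (.sq 20 2)) (.sq 21 1))) (.nd (.sq 18 2) (.oc [1] [2] [0] 4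 1 17) (.sq 20 1))) (.sq 16 2) (.sq 18 1))) (.sq 16 1))) (.sq 14 1) (.sq 10 3)) (.nd (.sq 12 2) (.oc [1] [2] [0] 4 1 11) (.sq 14 1))) (.sq 6 4) (.sq 12 1))) (.nd (.nd (.sq 12 1) (.oc [1] [0] [2] 1 4 9) (.sq 10 2)) (.nd (.sq 8 3) (.sq 12 1) (.nd (.nd (.sq 14 1) (.nd (.nd (.sq 16 1) (.sq 14 2) (.oc [2] [0] [1] 5 8 13)) (.sq 15 1) (.sq 1 8)) (.nd (.sq 13 2) (.oc [1] [2] [0] 4 1 12) (.sq 15 1))) (.sq 11 2) (.sq 13 1))) (.sq 11 1))) (.sq 9 1) (.sq 7 2)) (.sq 8 1))) (.nd (.sq 5 2) (.nd (.nd (.sq 9 1) (.nd (.sq 8 2) (.sq 10 1) (.nd (.oc [0] [2] [1] 6 9 2) (.nd (.nd (.sq 13 1) (.sq 7 4) (.nd (.nd (.sq 15 1) (.nd (.nd (.sq 17 1) (.sq 15 2) (.nd (.sq 12 4) (.nd (.nd (.sq 20 1) (.nd (.sq 19 2) (.sq 21 1) (.nd (.oc [0] [1] [2] 20 6 9) (.nd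 (.nd (.sq 24 1) (.sq 18 4) (.nd (.nd (.sq 26 1) (.sq 6 11) (.sq 24 2)) (.nd (.sq 22 3) (.sq 26 1) (.nd (.oc [0] [1,2] [1,0,2] 9 0 20) (.sq 25 2) (.sq 27 1))) (.sq 25 1))) (.sq 23 1) (.sq 21 2)) (.sq 22 1))) (.sq 16 3)) (.sq 19 1) (.nd (.nd (.sq 21 1) (.oc [1] [0] [2] 1 19 12) (.nd (.sq 20 2) (.nd (.nd (.sq 24 1) (.nd (.sq 23 2) (.sq 25 1) (.nd (.oc [0] [1] [2] 24 6 9) (.nd (.nd (.sq 28 1) (.sq 22 4) (.sq 0 15)) (.sq 27 1) (.sq 25 2)) (.sq 26 1))) (.nd (.nd (.sq 26 1) (.oc [1] [2,0] [2,1,0] 4 10 19) (.sq 24 2)) (.sq 21 3) (.sq 25 1))) (.sq 23 1) (.sq 17 4)) (.sq 22 1))) (.sq 18 2) (.sq 20 1))) (.sq 18 1))) (.sq 16 1) (.oc [2] [1] [0] 11 14 7)) (.sq 13 2)) (.nd (.sq 11 3) (.sq 15 1) (.nd (.nd (.sq 17 1) (.oc [1] [2] [0] 15 1 4) (.nd (.sq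 16 2) (.nd (.nd (.sq 20 1) (.nd (.sq 19 2) (.sq 21 1) (.sq 1 11)) (.nd (.nd (.sq 22 1) (.nd (.nd (.sq 24 1) (.sq 22 2) (.nd (.sq 19 4) (.nd (.nd (.sq 27 1) (.nd (.sq 26 2) (.sq 28 1) (.nd (.oc [0] [1] [2] 27 6 9) (.nd (.nd (.sq 31 1) (.sq 25 4) (.nd (.oc [0] [1,2] [1,0,2] 27 0 9) (.nd (.sq 29 3) (.sq 33 1) (.nd (.nd (.sq 35 1) (.oc [1] [0] [2] 1 33 19) (.nd (.sq 34 2) (.nd (.nd (.sq 38 1) (.nd (.sq 37 2) (.sq 39 1) (.nd (.oc [0] [1] [2] 38 6 9) (.nd (.nd (.sq 42 1) (.sq 36 4) (.nd (.oc [0] [1,2] [1,0,2] 38 0 9) (.nd (.sq 40 3) (.sq 44 1) (.sq 24 11)) (.sq 43 1))) (.sq 41 1) (.sq 39 2)) (.sq 40 1))) (.nd (.nd (.sq 40 1) (.sq 6 18) (.sq 38 2)) (.sq 35 3) (.sq 39 1))) (.sq 37 1) (.sq 31 4)) (.sq 36 1))) (.sq 32 2) (.sq 34 1))) (.sq 32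 1))) (.sq 30 1) (.sq 28 2)) (.sq 29 1))) (.sq 23 3)) (.sq 26 1) (.nd (.nd (.sq 28 1) (.oc [1] [0] [2] 1 26 19) (.nd (.sq 27 2) (.nd (.nd (.sq 31 1) (.nd (.sq 30 2) (.sq 32 1) (.nd (.oc [0] [1] [2] 31 6 9) (.nd (.nd (.sq 35 1) (.sq 29 4) (.nd (.oc [0] [1,2] [1,0,2] 31 0 9) (.nd (.sq 33 3) (.sq 37 1) (.nd (.nd (.sq 39 1) (.oc [1] [0] [2] 1 37 19) (.nd (.sq 38 2) (.nd (.nd (.sq 42 1) (.nd (.sq 41 2) (.sq 43 1) (.sq 23 11)) (.sq 0 22)) (.sq 41 1) (.sq 35 4)) (.sq 40 1))) (.sq 36 2) (.sq 38 1))) (.sq 36 1))) (.sq 34 1) (.sq 32 2)) (.sq 33 1))) (.nd (.sq 12 11) (.sq 28 3) (.sq 32 1))) (.sq 30 1) (.sq 24 4)) (.sq 29 1))) (.sq 25 2) (.sq 27 1))) (.sq 25 1))) (.sq 23 1) (.oc [2] [1] [0] 11 21 7)) (.sq 20 2)) (.sq 17 3) (.sq 21 1))) (.sq 19 1) (.sq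 13 4)) (.sq 18 1))) (.sq 14 2) (.sq 16 1))) (.sq 14 1))) (.sq 12 1) (.sq 10 2)) (.sq 11 1))) (.nd (.nd (.sq 11 1) (.nd (.nd (.sq 13 1) (.sq 11 2) (.nd (.sq 8 4) (.nd (.nd (.sq 16 1) (.nd (.sq 15 2) (.sq 17 1) (.nd (.oc [0] [2] [1] 6 16 2) (.nd (.nd (.sq 20 1) (.sq 14 4) (.nd (.nd (.sq 22 1) (.nd (.nd (.sq 24 1) (.sq 22 2) (.nd (.sq 19 4) (.nd (.nd (.sq 27 1) (.sq 7 11) (.sq 23 3)) (.sq 26 1) (.nd (.nd (.sq 28 1) (.oc [1] [0] [2] 1 26 8) (.nd (.sq 27 2) (.nd (.nd (.sq 31 1) (.oc [1] [2,0] [2,1,0] 26 17 4) (.nd (.nd (.sq 33 1) (.nd (.nd (.sq 35 1) (.sq 33 2) (.nd (.sq 30 4) (.nd (.nd (.sq 38 1) (.nd (.sq 37 2) (.sq 39 1) (.nd (.oc [0] [1] [2] 38 6 16) (.nd (.nd (.sq 42 1) (.sq 36 4) (.sq 0 22)) (.sq 41 1) (.sq 39 2)) (.sq 40 1))) (.sq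 34 3)) (.sq 37 1) (.nd (.sq 18 11) (.sq 36 2) (.sq 38 1))) (.sq 36 1))) (.sq 34 1) (.oc [2] [0] [1] 32 7 10)) (.sq 31 2)) (.sq 28 3) (.sq 32 1))) (.sq 30 1) (.sq 24 4)) (.sq 29 1))) (.sq 25 2) (.sq 27 1))) (.sq 25 1))) (.sq 23 1) (.oc [2] [0] [1] 21 7 10)) (.sq 20 2)) (.nd (.sq 18 3) (.sq 22 1) (.nd (.nd (.sq 24 1) (.oc [1] [0] [2] 1 22 8) (.nd (.sq 23 2) (.nd (.nd (.sq 27 1) (.nd (.sq 26 2) (.sq 28 1) (.nd (.oc [0] [1] [2] 27 6 16) (.nd (.nd (.sq 31 1) (.sq 25 4) (.nd (.oc [0] [1,2] [1,0,2] 27 0 16) (.nd (.sq 29 3) (.sq 33 1) (.sq 13 11)) (.sq 32 1))) (.sq 30 1) (.sq 28 2)) (.sq 29 1))) (.nd (.nd (.sq 29 1) (.nd (.nd (.sq 31 1) (.sq 29 2) (.nd (.sq 26 4) (.nd (.nd (.sq 34 1) (.nd (.sq 33 2) (.sq 35 1) (.sq 1 18)) (.sq 30 3)) (.sq 33 1)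 (.nd (.nd (.sq 35 1) (.oc [1] [0] [2] 1 33 8) (.nd (.sq 34 2) (.nd (.nd (.sq 38 1) (.nd (.sq 37 2) (.sq 39 1) (.oc [2] [0,1] [0,2,1] 28 34 10)) (.nd (.sq 19 11) (.sq 35 3) (.sq 39 1))) (.sq 37 1) (.sq 31 4)) (.sq 36 1))) (.sq 32 2) (.sq 34 1))) (.sq 32 1))) (.sq 30 1) (.oc [2] [0] [1] 28 7 10)) (.sq 27 2)) (.sq 24 3) (.sq 28 1))) (.sq 26 1) (.sq 20 4)) (.sq 25 1))) (.sq 21 2) (.sq 23 1))) (.sq 21 1))) (.sq 19 1) (.sq 17 2)) (.sq 18 1))) (.sq 12 3)) (.sq 15 1) (.nd (.nd (.sq 17 1) (.oc [1] [0] [2] 1 15 8) (.nd (.sq 16 2) (.nd (.nd (.sq 20 1) (.nd (.sq 19 2) (.sq 21 1) (.nd (.oc [0] [2] [1] 6 20 2) (.nd (.nd (.sq 24 1) (.sq 18 4) (.nd (.nd (.sq 26 1) (.oc [1] [2,0] [2,1,0] 15 21 4) (.sq 24 2)) (.nd (.sq 22 3) (.sq 26 1) (.nd (.nd (.sq 28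 1) (.oc [1] [0] [2] 1 26 8) (.nd (.sq 27 2) (.nd (.nd (.sq 31 1) (.nd (.sq 30 2) (.sq 32 1) (.sq 12 11)) (.nd (.nd (.sq 33 1) (.nd (.nd (.sq 35 1) (.sq 33 2) (.nd (.sq 30 4) (.nd (.nd (.sq 38 1) (.nd (.sq 37 2) (.sq 39 1) (.oc [2] [0,1] [0,2,1] 10 16 32)) (.sq 34 3)) (.sq 37 1) (.nd (.nd (.sq 39 1) (.oc [1] [0] [2] 1 37 8) (.nd (.sq 38 2) (.nd (.nd (.sq 42 1) (.nd (.sq 41 2) (.sq 43 1) (.sq 1 22)) (.nd (.sq 23 11) (.sq 39 3) (.sq 43 1))) (.sq 41 1) (.sq 35 4)) (.sq 40 1))) (.sq 36 2) (.sq 38 1))) (.sq 36 1))) (.sq 34 1) (.oc [2] [0] [1] 32 7 10)) (.sq 31 2)) (.sq 28 3) (.sq 32 1))) (.sq 30 1) (.sq 24 4)) (.sq 29 1))) (.sq 25 2) (.sq 27 1))) (.sq 25 1))) (.sq 23 1) (.sq 21 2)) (.sq 22 1))) (.sq 0 11)) (.sq 19 1) (.sq 13 4)) (.sq 18 1)))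 (.sq 14 2) (.sq 16 1))) (.sq 14 1))) (.sq 12 1) (.nd (.oc [0] [2] [1] 6 11 2) (.nd (.nd (.sq 15 1) (.nd (.sq 14 2) (.sq 16 1) (.oc [2] [1] [0] 7 10 13)) (.nd (.nd (.sq 17 1) (.sq 7 6) (.sq 15 2)) (.nd (.sq 13 3) (.sq 17 1) (.nd (.nd (.sq 19 1) (.oc [1] [0] [2] 1 17 8) (.nd (.sq 18 2) (.nd (.nd (.sq 22 1) (.nd (.sq 21 2) (.sq 23 1) (.oc [2] [1] [0] 7 10 20)) (.nd (.nd (.sq 24 1) (.nd (.nd (.sq 26 1) (.sq 24 2) (.oc [2] [0] [1] 10 7 23)) (.sq 25 1) (.sq 1 13)) (.sq 22 2)) (.sq 19 3) (.sq 23 1))) (.sq 21 1) (.sq 15 4)) (.sq 20 1))) (.sq 16 2) (.sq 18 1))) (.sq 16 1))) (.sq 14 1) (.sq 12 2)) (.sq 13 1))) (.sq 9 2)) (.sq 6 3) (.sq 10 1))) (.sq 8 1) (.sq 2 4)) (.sq 7 1))) (.sq 3 2) (.sq 5 1))) (.sq 3 1))) (.sq 1 1) (.nd (.nd (.sq 3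 1) (.nd (.nd (.sq 5 1) (.sq 3 2) (.nd (.nd (.sq 7 1) (.nd (.sq 2 4) (.sq 8 1) (.nd (.nd (.sq 10 1) (.sq 6 3) (.nd (.sq 9 2) (.nd (.nd (.sq 13 1) (.nd (.sq 12 2) (.sq 14 1) (.nd (.nd (.sq 16 1) (.nd (.nd (.sq 18 1) (.sq 16 2) (.nd (.nd (.sq 20 1) (.nd (.sq 15 4) (.sq 21 1) (.nd (.nd (.sq 23 1) (.sq 19 3) (.nd (.sq 22 2) (.sq 0 13) (.sq 24 1))) (.nd (.oc [0] [1] [2] 0 10 20) (.sq 23 1) (.sq 21 2)) (.sq 22 1))) (.sq 18 2)) (.oc [1] [0] [2] 17 1 4) (.sq 19 1))) (.sq 17 1) (.sq 13 3)) (.nd (.sq 15 2) (.sq 7 6) (.sq 17 1))) (.nd (.oc [0] [1] [2] 0 10 13) (.sq 16 1) (.sq 14 2)) (.sq 15 1))) (.oc [2] [0] [1] 6 11 2)) (.sq 12 1) (.nd (.nd (.sq 14 1) (.nd (.nd (.sq 16 1) (.sq 14 2) (.nd (.nd (.sq 18 1) (.nd (.sq 13 4) (.sq 19 1) (.nd (.nd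 (.sq 21 1) (.sq 17 3) (.sq 1 11)) (.nd (.nd (.sq 22 1) (.nd (.sq 21 2) (.sq 23 1) (.nd (.nd (.sq 25 1) (.nd (.nd (.sq 27 1) (.sq 25 2) (.nd (.nd (.sq 29 1) (.nd (.sq 24 4) (.sq 30 1) (.nd (.nd (.sq 32 1) (.sq 28 3) (.nd (.sq 31 2) (.nd (.oc [0] [1] [2] 0 32 18) (.sq 34 1) (.nd (.nd (.sq 36 1) (.nd (.nd (.sq 38 1) (.sq 36 2) (.nd (.nd (.sq 40 1) (.nd (.sq 35 4) (.sq 41 1) (.nd (.nd (.sq 43 1) (.sq 39 3) (.sq 23 11)) (.sq 0 22) (.sq 42 1))) (.sq 38 2)) (.oc [1] [0] [2] 37 1 4) (.sq 39 1))) (.sq 37 1) (.nd (.sq 34 3) (.nd (.oc [0] [2,1] [2,0,1] 10 16 32) (.sq 39 1) (.sq 37 2)) (.sq 38 1))) (.sq 30 4)) (.sq 33 2) (.sq 35 1))) (.sq 33 1))) (.nd (.sq 12 11) (.sq 32 1) (.sq 30 2)) (.sq 31 1))) (.sq 27 2)) (.oc [1] [0] [2] 26 1 4) (.sq 28 1)))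 (.sq 26 1) (.sq 22 3)) (.nd (.sq 24 2) (.oc [1] [0,2] [0,1,2] 15 21 4) (.sq 26 1))) (.sq 18 4) (.sq 24 1))) (.oc [2] [0] [1] 6 20 2)) (.sq 21 1) (.sq 19 2)) (.sq 20 1))) (.sq 16 2)) (.oc [1] [0] [2] 15 1 4) (.sq 17 1))) (.sq 15 1) (.nd (.sq 12 3) (.nd (.nd (.sq 18 1) (.nd (.sq 17 2) (.sq 19 1) (.nd (.nd (.sq 21 1) (.nd (.nd (.sq 23 1) (.sq 21 2) (.nd (.nd (.sq 25 1) (.nd (.sq 20 4) (.sq 26 1) (.nd (.nd (.sq 28 1) (.sq 24 3) (.nd (.sq 27 2) (.nd (.oc [0] [1] [2] 0 28 14) (.sq 30 1) (.nd (.nd (.sq 32 1) (.nd (.nd (.sq 34 1) (.sq 32 2) (.nd (.nd (.sq 36 1) (.nd (.sq 31 4) (.sq 37 1) (.nd (.nd (.sq 39 1) (.sq 35 3) (.sq 19 11)) (.nd (.oc [0] [2,1] [2,0,1] 28 34 10) (.sq 39 1) (.sq 37 2)) (.sq 38 1))) (.sq 34 2)) (.oc [1] [0] [2] 33 1 4)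 (.sq 35 1))) (.sq 33 1) (.nd (.sq 30 3) (.sq 0 18) (.sq 34 1))) (.sq 26 4)) (.sq 29 2) (.sq 31 1))) (.sq 29 1))) (.nd (.nd (.sq 29 1) (.nd (.sq 28 2) (.sq 30 1) (.nd (.nd (.sq 32 1) (.nd (.sq 13 11) (.sq 33 1) (.sq 29 3)) (.nd (.sq 31 2) (.oc [1] [0,2] [0,1,2] 22 28 4) (.sq 33 1))) (.sq 25 4) (.sq 31 1))) (.oc [2] [0] [1] 6 27 2)) (.sq 28 1) (.sq 26 2)) (.sq 27 1))) (.sq 23 2)) (.oc [1] [0] [2] 22 1 4) (.sq 24 1))) (.sq 22 1) (.sq 18 3)) (.nd (.sq 20 2) (.nd (.oc [0] [1] [2] 0 21 14) (.sq 23 1) (.nd (.nd (.sq 25 1) (.nd (.nd (.sq 27 1) (.sq 25 2) (.nd (.nd (.sq 29 1) (.nd (.sq 24 4) (.sq 30 1) (.nd (.nd (.sq 32 1) (.sq 28 3) (.nd (.sq 31 2) (.nd (.oc [0] [1] [2] 0 32 14) (.sq 34 1) (.nd (.nd (.sq 36 1) (.nd (.nd (.sq 38 1) (.sq 36 2) (.sq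 18 11)) (.sq 37 1) (.nd (.sq 34 3) (.nd (.nd (.sq 40 1) (.nd (.sq 39 2) (.sq 41 1) (.nd (.nd (.sq 43 1) (.nd (.nd (.sq 45 1) (.sq 43 2) (.oc [2] [1,0] [1,2,0] 16 22 38)) (.sq 44 1) (.sq 40 3)) (.sq 1 22)) (.sq 36 4) (.sq 42 1))) (.oc [2] [0] [1] 6 38 2)) (.sq 39 1) (.sq 37 2)) (.sq 38 1))) (.sq 30 4)) (.sq 33 2) (.sq 35 1))) (.sq 33 1))) (.oc [1] [0,2] [0,1,2] 26 17 4) (.sq 31 1))) (.sq 27 2)) (.oc [1] [0] [2] 26 1 4) (.sq 28 1))) (.sq 26 1) (.nd (.sq 23 3) (.sq 7 11) (.sq 27 1))) (.sq 19 4)) (.sq 22 2) (.sq 24 1))) (.sq 22 1))) (.sq 14 4) (.sq 20 1))) (.oc [2] [0] [1] 6 16 2)) (.sq 17 1) (.sq 15 2)) (.sq 16 1))) (.sq 8 4)) (.sq 11 2) (.sq 13 1))) (.sq 11 1))) (.nd (.nd (.sq 11 1) (.nd (.sq 10 2) (.sq 12 1) (.nd (.nd (.sq 14 1) (.nd (.nd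 (.sq 16 1) (.sq 14 2) (.nd (.nd (.sq 18 1) (.nd (.sq 13 4) (.sq 19 1) (.nd (.nd (.sq 21 1) (.sq 17 3) (.nd (.sq 20 2) (.nd (.oc [0] [1] [2] 0 21 7) (.sq 23 1) (.nd (.nd (.sq 25 1) (.nd (.nd (.sq 27 1) (.sq 25 2) (.nd (.nd (.sq 29 1) (.nd (.sq 24 4) (.sq 30 1) (.nd (.nd (.sq 32 1) (.sq 28 3) (.sq 12 11)) (.nd (.nd (.sq 33 1) (.nd (.sq 32 2) (.sq 34 1) (.nd (.nd (.sq 36 1) (.nd (.nd (.sq 38 1) (.sq 36 2) (.nd (.nd (.sq 40 1) (.nd (.sq 35 4) (.sq 41 1) (.nd (.nd (.sq 43 1) (.sq 39 3) (.sq 1 22)) (.nd (.sq 23 11) (.sq 43 1) (.sq 41 2)) (.sq 42 1))) (.sq 38 2)) (.oc [1] [0] [2] 37 1 4) (.sq 39 1))) (.sq 37 1) (.sq 33 3)) (.oc [2] [1,0] [1,2,0] 31 22 9)) (.sq 29 4) (.sq 35 1))) (.oc [2] [0] [1] 6 31 2)) (.sq 32 1) (.sq 30 2)) (.sq 31 1)))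 (.sq 27 2)) (.oc [1] [0] [2] 26 1 4) (.sq 28 1))) (.sq 26 1) (.nd (.sq 23 3) (.nd (.nd (.sq 29 1) (.nd (.sq 28 2) (.sq 30 1) (.nd (.nd (.sq 32 1) (.nd (.nd (.sq 34 1) (.sq 32 2) (.nd (.nd (.sq 36 1) (.nd (.sq 31 4) (.sq 37 1) (.nd (.nd (.sq 39 1) (.sq 35 3) (.nd (.sq 38 2) (.sq 6 18) (.sq 40 1))) (.nd (.nd (.sq 40 1) (.nd (.sq 39 2) (.sq 41 1) (.nd (.nd (.sq 43 1) (.nd (.sq 24 11) (.sq 44 1) (.sq 40 3)) (.nd (.sq 42 2) (.oc [1] [0,2] [0,1,2] 4 39 15) (.sq 44 1))) (.sq 36 4) (.sq 42 1))) (.oc [2] [0] [1] 6 38 2)) (.sq 39 1) (.sq 37 2)) (.sq 38 1))) (.sq 34 2)) (.oc [1] [0] [2] 33 1 4) (.sq 35 1))) (.sq 33 1) (.sq 29 3)) (.nd (.sq 31 2) (.oc [1] [0,2] [0,1,2] 4 28 15) (.sq 33 1))) (.sq 25 4) (.sq 31 1))) (.oc [2] [0] [1] 6 27 2)) (.sq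 28 1) (.sq 26 2)) (.sq 27 1))) (.sq 19 4)) (.sq 22 2) (.sq 24 1))) (.sq 22 1))) (.sq 0 11) (.sq 20 1))) (.sq 16 2)) (.oc [1] [0] [2] 15 1 4) (.sq 17 1))) (.sq 15 1) (.sq 11 3)) (.nd (.sq 13 2) (.nd (.oc [0] [1] [2] 0 14 7) (.sq 16 1) (.nd (.nd (.sq 18 1) (.nd (.nd (.sq 20 1) (.sq 18 2) (.nd (.nd (.sq 22 1) (.nd (.sq 17 4) (.sq 23 1) (.nd (.nd (.sq 25 1) (.sq 21 3) (.nd (.sq 24 2) (.oc [1] [0,2] [0,1,2] 4 10 19) (.sq 26 1))) (.nd (.nd (.sq 26 1) (.nd (.sq 25 2) (.sq 27 1) (.nd (.nd (.sq 29 1) (.nd (.nd (.sq 31 1) (.sq 29 2) (.oc [2] [1,0] [1,2,0] 9 15 24)) (.sq 30 1) (.sq 26 3)) (.sq 1 15)) (.sq 22 4) (.sq 28 1))) (.oc [2] [0] [1] 6 24 2)) (.sq 25 1) (.sq 23 2)) (.sq 24 1))) (.sq 20 2)) (.oc [1] [0] [2] 19 1 4) (.sq 21 1))) (.sq 19 1)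 (.nd (.sq 16 3) (.nd (.nd (.sq 22 1) (.nd (.sq 21 2) (.sq 23 1) (.nd (.nd (.sq 25 1) (.nd (.nd (.sq 27 1) (.sq 25 2) (.nd (.nd (.sq 29 1) (.nd (.sq 24 4) (.sq 30 1) (.nd (.nd (.sq 32 1) (.sq 28 3) (.nd (.sq 31 2) (.oc [1] [0,2] [0,1,2] 4 10 26) (.sq 33 1))) (.nd (.nd (.sq 33 1) (.nd (.sq 32 2) (.sq 34 1) (.nd (.nd (.sq 36 1) (.nd (.sq 17 11) (.sq 37 1) (.sq 33 3)) (.nd (.sq 35 2) (.nd (.oc [0] [1] [2] 0 36 7) (.sq 38 1) (.nd (.nd (.sq 40 1) (.nd (.oc [0] [2,1] [2,0,1] 36 5 14) (.sq 41 1) (.nd (.sq 38 3) (.sq 0 22) (.sq 42 1))) (.sq 34 4)) (.sq 37 2) (.sq 39 1))) (.sq 37 1))) (.sq 29 4) (.sq 35 1))) (.oc [2] [0] [1] 6 31 2)) (.sq 32 1) (.sq 30 2)) (.sq 31 1))) (.sq 27 2)) (.oc [1] [0] [2] 26 1 4) (.sq 28 1))) (.sq 26 1) (.sq 22 3)) (.nd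 (.sq 24 2) (.sq 6 11) (.sq 26 1))) (.sq 18 4) (.sq 24 1))) (.oc [2] [0] [1] 6 20 2)) (.sq 21 1) (.sq 19 2)) (.sq 20 1))) (.sq 12 4)) (.sq 15 2) (.sq 17 1))) (.sq 15 1))) (.sq 7 4) (.sq 13 1))) (.oc [2] [0] [1] 6 9 2)) (.sq 10 1) (.sq 8 2)) (.sq 9 1))) (.sq 5 2)) (.nd (.nd (.sq 8 1) (.nd (.sq 7 2) (.sq 9 1) (.nd (.nd (.sq 11 1) (.nd (.nd (.sq 13 1) (.sq 11 2) (.nd (.nd (.sq 15 1) (.oc [1] [0] [2] 4 1 12) (.sq 13 2)) (.sq 0 8) (.sq 14 1))) (.sq 12 1) (.sq 8 3)) (.nd (.sq 10 2) (.oc [1] [2] [0] 1 4 9) (.sq 12 1))) (.nd (.oc [0] [1] [2] 0 5 8) (.sq 11 1) (.sq 9 2)) (.sq 10 1))) (.sq 4 3)) (.sq 7 1) (.nd (.nd (.sq 9 1) (.nd (.nd (.sq 11 1) (.sq 9 2) (.sq 1 6)) (.sq 10 1) (.nd (.sq 7 3) (.nd (.nd (.sq 13 1) (.nd (.sq 12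 2) (.sq 14 1) (.nd (.nd (.sq 16 1) (.nd (.nd (.sq 18 1) (.sq 16 2) (.nd (.nd (.sq 20 1) (.oc [1] [0] [2] 4 1 17) (.sq 18 2)) (.nd (.oc [0] [1] [2] 0 18 9) (.sq 20 1) (.nd (.nd (.sq 22 1) (.nd (.nd (.sq 24 1) (.sq 22 2) (.sq 14 6)) (.sq 23 1) (.nd (.sq 20 3) (.sq 0 13) (.sq 24 1))) (.nd (.sq 21 2) (.oc [1] [2] [0] 1 4 20) (.sq 23 1))) (.sq 19 2) (.sq 21 1))) (.sq 19 1))) (.sq 17 1) (.sq 13 3)) (.nd (.sq 15 2) (.oc [1] [2] [0] 1 4 14) (.sq 17 1))) (.sq 9 4) (.sq 15 1))) (.oc [2] [0] [1] 8 11 2)) (.sq 12 1) (.sq 10 2)) (.sq 11 1))) (.nd (.sq 8 2) (.oc [1] [2] [0] 1 4 7) (.sq 10 1))) (.sq 6 2) (.sq 8 1))) (.sq 6 1))) (.sq 4 1) (.sq 0 3)) (.nd (.sq 2 2) (.nd (.nd (.sq 6 1) (.nd (.sq 5 2) (.sq 7 1) (.nd (.nd (.sq 9 1) (.nd (.nd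 (.sq 11 1) (.sq 9 2) (.nd (.nd (.sq 13 1) (.nd (.sq 8 4) (.sq 14 1) (.nd (.nd (.sq 16 1) (.sq 12 3) (.nd (.sq 15 2) (.nd (.nd (.sq 19 1) (.nd (.sq 18 2) (.sq 20 1) (.nd (.nd (.sq 22 1) (.nd (.nd (.sq 24 1) (.sq 22 2) (.sq 0 13)) (.sq 23 1) (.sq 19 3)) (.nd (.sq 21 2) (.sq 13 6) (.sq 23 1))) (.nd (.oc [0] [1] [2] 0 3 19) (.sq 22 1) (.sq 20 2)) (.sq 21 1))) (.oc [2] [0] [1] 12 17 8)) (.sq 18 1) (.nd (.oc [0] [2] [1] 3 0 16) (.sq 17 2) (.sq 19 1))) (.sq 17 1))) (.nd (.oc [0] [1] [2] 0 3 13) (.sq 16 1) (.sq 14 2)) (.sq 15 1))) (.sq 11 2)) (.oc [1] [2] [0] 7 10 1) (.sq 12 1))) (.sq 10 1) (.sq 6 3)) (.nd (.sq 8 2) (.sq 0 6) (.sq 10 1))) (.nd (.oc [0] [1] [2] 0 3 6) (.sq 9 1) (.sq 7 2)) (.sq 8 1))) (.nd (.nd (.sq 8 1) (.nd (.nd (.sq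 10 1) (.sq 8 2) (.nd (.sq 5 4) (.nd (.nd (.sq 13 1) (.nd (.sq 12 2) (.sq 14 1) (.nd (.nd (.sq 16 1) (.oc [1] [0] [2] 9 14 5) (.nd (.sq 15 2) (.nd (.nd (.sq 19 1) (.nd (.sq 18 2) (.sq 20 1) (.sq 10 6)) (.nd (.nd (.sq 21 1) (.nd (.nd (.sq 23 1) (.sq 21 2) (.nd (.sq 18 4) (.sq 0 13) (.sq 24 1))) (.sq 22 1) (.oc [2] [0] [1] 20 4 7)) (.sq 19 2)) (.sq 16 3) (.sq 20 1))) (.sq 18 1) (.nd (.oc [0] [2] [1] 3 0 16) (.sq 17 2) (.sq 19 1))) (.sq 17 1))) (.nd (.oc [0] [1] [2] 0 3 13) (.sq 16 1) (.sq 14 2)) (.sq 15 1))) (.sq 9 3)) (.sq 12 1) (.nd (.oc [0] [2] [1] 3 0 10) (.sq 11 2) (.sq 13 1))) (.sq 11 1))) (.sq 9 1) (.nd (.nd (.sq 11 1) (.sq 7 3) (.nd (.sq 10 2) (.nd (.nd (.sq 14 1) (.nd (.sq 13 2) (.sq 15 1) (.oc [2] [1] [0] 4 7 12)) (.sq 0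 8)) (.sq 13 1) (.nd (.oc [0] [2] [1] 3 0 11) (.sq 12 2) (.sq 14 1))) (.sq 12 1))) (.nd (.oc [0] [1] [2] 0 3 8) (.sq 11 1) (.sq 9 2)) (.sq 10 1))) (.sq 6 2)) (.sq 3 3) (.sq 7 1))) (.sq 5 1) (.nd (.nd (.sq 7 1) (.nd (.nd (.sq 9 1) (.sq 7 2) (.nd (.nd (.sq 11 1) (.nd (.sq 6 4) (.sq 12 1) (.nd (.nd (.sq 14 1) (.sq 10 3) (.nd (.sq 13 2) (.nd (.oc [0] [2] [1] 14 0 3) (.sq 16 1) (.nd (.nd (.sq 18 1) (.nd (.nd (.sq 20 1) (.sq 18 2) (.sq 0 11)) (.sq 19 1) (.nd (.sq 16 3) (.nd (.nd (.sq 22 1) (.nd (.sq 21 2) (.sq 23 1) (.nd (.nd (.sq 25 1) (.nd (.nd (.sq 27 1) (.sq 25 2) (.nd (.nd (.sq 29 1) (.nd (.sq 24 4) (.sq 30 1) (.nd (.nd (.sq 32 1) (.sq 28 3) (.nd (.sq 31 2) (.nd (.oc [0] [1] [2] 0 32 18) (.sq 34 1) (.nd (.nd (.sq 36 1) (.nd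 (.nd (.sq 38 1) (.sq 36 2) (.nd (.nd (.sq 40 1) (.nd (.sq 35 4) (.sq 41 1) (.nd (.nd (.sq 43 1) (.sq 39 3) (.sq 23 11)) (.nd (.oc [0] [2,1] [2,0,1] 3 38 14) (.sq 43 1) (.sq 41 2)) (.sq 42 1))) (.sq 38 2)) (.oc [1] [0] [2] 37 5 8) (.sq 39 1))) (.sq 37 1) (.nd (.sq 34 3) (.nd (.sq 5 18) (.sq 39 1) (.sq 37 2)) (.sq 38 1))) (.sq 30 4)) (.sq 33 2) (.sq 35 1))) (.sq 33 1))) (.nd (.oc [0] [2,1] [2,0,1] 3 27 14) (.sq 32 1) (.sq 30 2)) (.sq 31 1))) (.sq 27 2)) (.oc [1] [0] [2] 26 5 8) (.sq 28 1))) (.sq 26 1) (.sq 22 3)) (.nd (.sq 24 2) (.nd (.oc [0] [1] [2] 0 25 18) (.sq 27 1) (.nd (.nd (.sq 29 1) (.nd (.nd (.sq 31 1) (.sq 29 2) (.nd (.nd (.sq 33 1) (.nd (.sq 28 4) (.sq 34 1) (.nd (.nd (.sq 36 1) (.sq 32 3) (.nd (.sq 35 2) (.nd (.oc [0] [1] [2]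 0 36 18) (.sq 38 1) (.nd (.nd (.sq 40 1) (.nd (.nd (.sq 42 1) (.sq 40 2) (.sq 22 11)) (.sq 41 1) (.nd (.sq 38 3) (.sq 0 22) (.sq 42 1))) (.sq 34 4)) (.sq 37 2) (.sq 39 1))) (.sq 37 1))) (.oc [1] [0,2] [0,1,2] 30 21 8) (.sq 35 1))) (.sq 31 2)) (.oc [1] [0] [2] 30 5 8) (.sq 32 1))) (.sq 30 1) (.nd (.sq 27 3) (.sq 11 11) (.sq 31 1))) (.sq 23 4)) (.sq 26 2) (.sq 28 1))) (.sq 26 1))) (.sq 18 4) (.sq 24 1))) (.oc [2] [0] [1] 10 20 6)) (.sq 21 1) (.sq 19 2)) (.sq 20 1))) (.sq 12 4)) (.sq 15 2) (.sq 17 1))) (.sq 15 1))) (.nd (.nd (.sq 15 1) (.nd (.sq 14 2) (.sq 16 1) (.nd (.nd (.sq 18 1) (.nd (.nd (.sq 20 1) (.sq 18 2) (.nd (.nd (.sq 22 1) (.nd (.sq 17 4) (.sq 23 1) (.nd (.nd (.sq 25 1) (.sq 21 3) (.nd (.sq 24 2) (.nd (.oc [0] [1] [2] 0 25 11) (.sq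 27 1) (.nd (.nd (.sq 29 1) (.nd (.nd (.sq 31 1) (.sq 29 2) (.nd (.nd (.sq 33 1) (.nd (.sq 28 4) (.sq 34 1) (.nd (.nd (.sq 36 1) (.sq 32 3) (.sq 16 11)) (.nd (.nd (.sq 37 1) (.nd (.sq 36 2) (.sq 38 1) (.nd (.nd (.sq 40 1) (.nd (.nd (.sq 42 1) (.sq 40 2) (.sq 0 22)) (.sq 41 1) (.sq 37 3)) (.oc [2] [1,0] [1,2,0] 35 4 13)) (.sq 33 4) (.sq 39 1))) (.oc [2] [0] [1] 10 35 6)) (.sq 36 1) (.sq 34 2)) (.sq 35 1))) (.sq 31 2)) (.oc [1] [0] [2] 30 5 8) (.sq 32 1))) (.sq 30 1) (.nd (.sq 27 3) (.nd (.oc [0] [2,1] [2,0,1] 3 9 25) (.sq 32 1) (.sq 30 2)) (.sq 31 1))) (.sq 23 4)) (.sq 26 2) (.sq 28 1))) (.sq 26 1))) (.nd (.sq 5 11) (.sq 25 1) (.sq 23 2)) (.sq 24 1))) (.sq 20 2)) (.oc [1] [0] [2] 19 5 8) (.sq 21 1))) (.sq 19 1) (.sq 15 3)) (.nd (.sq 17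 2) (.nd (.oc [0] [1] [2] 0 18 11) (.sq 20 1) (.nd (.nd (.sq 22 1) (.nd (.nd (.sq 24 1) (.sq 22 2) (.nd (.nd (.sq 26 1) (.nd (.sq 21 4) (.sq 27 1) (.nd (.nd (.sq 29 1) (.sq 25 3) (.nd (.sq 28 2) (.oc [1] [0,2] [0,1,2] 8 14 23) (.sq 30 1))) (.sq 0 15) (.sq 28 1))) (.sq 24 2)) (.oc [1] [0] [2] 23 5 8) (.sq 25 1))) (.sq 23 1) (.nd (.sq 20 3) (.nd (.oc [0] [2,1] [2,0,1] 3 9 18) (.sq 25 1) (.sq 23 2)) (.sq 24 1))) (.sq 16 4)) (.sq 19 2) (.sq 21 1))) (.sq 19 1))) (.sq 11 4) (.sq 17 1))) (.oc [2] [0] [1] 10 13 6)) (.sq 14 1) (.sq 12 2)) (.sq 13 1))) (.sq 9 2)) (.oc [1] [2] [0] 5 8 1) (.sq 10 1))) (.sq 8 1) (.nd (.sq 5 3) (.nd (.nd (.sq 11 1) (.nd (.sq 10 2) (.sq 12 1) (.nd (.nd (.sq 14 1) (.nd (.nd (.sq 16 1) (.sq 14 2) (.nd (.nd (.sq 18 1)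 (.nd (.sq 13 4) (.sq 19 1) (.nd (.nd (.sq 21 1) (.sq 17 3) (.nd (.sq 20 2) (.nd (.oc [0] [1] [2] 0 21 7) (.sq 23 1) (.nd (.nd (.sq 25 1) (.nd (.nd (.sq 27 1) (.sq 25 2) (.nd (.nd (.sq 29 1) (.nd (.sq 24 4) (.sq 30 1) (.nd (.nd (.sq 32 1) (.sq 28 3) (.sq 12 11)) (.nd (.oc [0] [2,1] [2,0,1] 21 27 3) (.sq 32 1) (.sq 30 2)) (.sq 31 1))) (.sq 27 2)) (.oc [1] [0] [2] 26 5 15) (.sq 28 1))) (.sq 26 1) (.nd (.sq 23 3) (.nd (.nd (.sq 29 1) (.nd (.sq 28 2) (.sq 30 1) (.nd (.nd (.sq 32 1) (.nd (.nd (.sq 34 1) (.sq 32 2) (.sq 0 18)) (.sq 33 1) (.sq 29 3)) (.nd (.sq 31 2) (.nd (.oc [0] [1] [2] 0 32 7) (.sq 34 1) (.nd (.nd (.sq 36 1) (.nd (.nd (.sq 38 1) (.sq 36 2) (.oc [2] [1,0] [1,2,0] 27 33 9)) (.sq 37 1) (.nd (.sq 34 3) (.sq 18 11) (.sq 38 1)))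 (.sq 30 4)) (.sq 33 2) (.sq 35 1))) (.sq 33 1))) (.sq 25 4) (.sq 31 1))) (.oc [2] [0] [1] 6 27 13)) (.sq 28 1) (.sq 26 2)) (.sq 27 1))) (.sq 19 4)) (.sq 22 2) (.sq 24 1))) (.sq 22 1))) (.nd (.nd (.sq 22 1) (.nd (.sq 21 2) (.sq 23 1) (.nd (.nd (.sq 25 1) (.nd (.sq 6 11) (.sq 26 1) (.sq 22 3)) (.nd (.sq 24 2) (.nd (.oc [0] [1] [2] 0 25 7) (.sq 27 1) (.nd (.nd (.sq 29 1) (.nd (.oc [0] [2,1] [2,0,1] 25 16 3) (.sq 30 1) (.nd (.sq 27 3) (.nd (.nd (.sq 33 1) (.nd (.sq 32 2) (.sq 34 1) (.nd (.nd (.sq 36 1) (.nd (.nd (.sq 38 1) (.sq 36 2) (.nd (.nd (.sq 40 1) (.nd (.sq 35 4) (.sq 41 1) (.nd (.nd (.sq 43 1) (.sq 39 3) (.nd (.sq 42 2) (.oc [1] [0,2] [0,1,2] 15 21 37) (.sq 44 1))) (.sq 0 22) (.sq 42 1))) (.sq 38 2)) (.oc [1] [0] [2] 37 5 15) (.sq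 39 1))) (.sq 37 1) (.sq 33 3)) (.nd (.sq 35 2) (.sq 17 11) (.sq 37 1))) (.sq 29 4) (.sq 35 1))) (.oc [2] [0] [1] 6 31 13)) (.sq 32 1) (.sq 30 2)) (.sq 31 1))) (.sq 23 4)) (.sq 26 2) (.sq 28 1))) (.sq 26 1))) (.sq 18 4) (.sq 24 1))) (.oc [2] [0] [1] 6 20 13)) (.sq 21 1) (.sq 19 2)) (.sq 20 1))) (.sq 16 2)) (.oc [1] [2] [0] 5 15 1) (.sq 17 1))) (.sq 15 1) (.sq 11 3)) (.nd (.sq 13 2) (.nd (.oc [0] [1] [2] 0 14 7) (.sq 16 1) (.nd (.nd (.sq 18 1) (.nd (.nd (.sq 20 1) (.sq 18 2) (.nd (.nd (.sq 22 1) (.nd (.sq 17 4) (.sq 23 1) (.nd (.nd (.sq 25 1) (.sq 21 3) (.nd (.sq 24 2) (.nd (.oc [0] [1] [2] 0 25 7) (.sq 27 1) (.nd (.nd (.sq 29 1) (.nd (.nd (.sq 31 1) (.sq 29 2) (.sq 11 11)) (.sq 30 1) (.nd (.sq 27 3) (.nd (.nd (.sq 33 1) (.nd (.sq 32 2) (.sq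 34 1) (.nd (.nd (.sq 36 1) (.nd (.nd (.sq 38 1) (.sq 36 2) (.oc [2] [1,0] [1,2,0] 9 15 31)) (.sq 37 1) (.sq 33 3)) (.nd (.sq 35 2) (.nd (.oc [0] [1] [2] 0 36 7) (.sq 38 1) (.nd (.nd (.sq 40 1) (.nd (.nd (.sq 42 1) (.sq 40 2) (.sq 0 22)) (.sq 41 1) (.nd (.sq 38 3) (.sq 22 11) (.sq 42 1))) (.sq 34 4)) (.sq 37 2) (.sq 39 1))) (.sq 37 1))) (.sq 29 4) (.sq 35 1))) (.oc [2] [0] [1] 6 31 17)) (.sq 32 1) (.sq 30 2)) (.sq 31 1))) (.sq 23 4)) (.sq 26 2) (.sq 28 1))) (.sq 26 1))) (.nd (.oc [0] [2,1] [2,0,1] 14 20 3) (.sq 25 1) (.sq 23 2)) (.sq 24 1))) (.sq 20 2)) (.oc [1] [2] [0] 5 19 1) (.sq 21 1))) (.sq 19 1) (.nd (.sq 16 3) (.sq 0 11) (.sq 20 1))) (.sq 12 4)) (.sq 15 2) (.sq 17 1))) (.sq 15 1))) (.sq 7 4) (.sq 13 1))) (.nd (.nd (.sq 13 1) (.nd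 (.nd (.sq 15 1) (.sq 13 2) (.oc [2] [0] [1] 6 9 12)) (.sq 14 1) (.nd (.nd (.sq 16 1) (.sq 12 3) (.nd (.sq 15 2) (.nd (.oc [0] [1] [2] 0 16 7) (.sq 18 1) (.nd (.nd (.sq 20 1) (.nd (.nd (.sq 22 1) (.sq 20 2) (.oc [2] [0] [1] 6 9 19)) (.sq 21 1) (.nd (.sq 18 3) (.nd (.nd (.sq 24 1) (.nd (.sq 23 2) (.sq 25 1) (.oc [2] [1] [0] 9 6 22)) (.sq 0 13)) (.sq 23 1) (.sq 21 2)) (.sq 22 1))) (.sq 14 4)) (.sq 17 2) (.sq 19 1))) (.sq 17 1))) (.nd (.sq 6 6) (.sq 16 1) (.sq 14 2)) (.sq 15 1))) (.sq 11 2)) (.oc [1] [2] [0] 5 10 1) (.sq 12 1))) (.sq 10 1) (.sq 8 2)) (.sq 9 1))) (.sq 1 4)) (.sq 4 2) (.sq 6 1))) (.sq 4 1))) (.nd (.nd (.sq 4 1) (.nd (.sq 3 2) (.sq 5 1) (.nd (.nd (.sq 7 1) (.nd (.nd (.sq 9 1) (.sq 7 2) (.nd (.nd (.sq 11 1) (.nd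 (.sq 6 4) (.sq 12 1) (.nd (.nd (.sq 14 1) (.sq 10 3) (.nd (.sq 13 2) (.nd (.oc [0] [1] [2] 4 14 0) (.sq 16 1) (.nd (.nd (.sq 18 1) (.nd (.nd (.sq 20 1) (.sq 18 2) (.nd (.nd (.sq 22 1) (.nd (.sq 17 4) (.sq 23 1) (.nd (.nd (.sq 25 1) (.sq 21 3) (.sq 5 11)) (.nd (.nd (.sq 26 1) (.nd (.sq 25 2) (.sq 27 1) (.nd (.nd (.sq 29 1) (.nd (.nd (.sq 31 1) (.sq 29 2) (.nd (.nd (.sq 33 1) (.nd (.sq 28 4) (.sq 34 1) (.nd (.nd (.sq 36 1) (.sq 32 3) (.nd (.sq 35 2) (.nd (.oc [0] [1] [2] 4 36 0) (.sq 38 1) (.nd (.nd (.sq 40 1) (.nd (.nd (.sq 42 1) (.sq 40 2) (.sq 0 22)) (.sq 41 1) (.nd (.sq 38 3) (.nd (.oc [0] [2,1] [2,0,1] 14 20 36) (.sq 43 1) (.sq 41 2)) (.sq 42 1))) (.sq 34 4)) (.sq 37 2) (.sq 39 1))) (.sq 37 1))) (.nd (.sq 16 11) (.sq 36 1) (.sq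 34 2)) (.sq 35 1))) (.sq 31 2)) (.oc [1] [0] [2] 30 5 8) (.sq 32 1))) (.sq 30 1) (.sq 26 3)) (.oc [2] [1,0] [1,2,0] 24 15 2)) (.sq 22 4) (.sq 28 1))) (.oc [2] [0] [1] 10 24 6)) (.sq 25 1) (.sq 23 2)) (.sq 24 1))) (.sq 20 2)) (.oc [1] [0] [2] 19 5 8) (.sq 21 1))) (.sq 19 1) (.nd (.sq 16 3) (.nd (.nd (.sq 22 1) (.nd (.sq 21 2) (.sq 23 1) (.nd (.nd (.sq 25 1) (.nd (.nd (.sq 27 1) (.sq 25 2) (.nd (.nd (.sq 29 1) (.nd (.sq 24 4) (.sq 30 1) (.nd (.nd (.sq 32 1) (.sq 28 3) (.nd (.sq 31 2) (.nd (.oc [0] [1] [2] 4 32 0) (.sq 34 1) (.sq 0 18)) (.sq 33 1))) (.nd (.nd (.sq 33 1) (.nd (.sq 32 2) (.sq 34 1) (.nd (.nd (.sq 36 1) (.nd (.sq 17 11) (.sq 37 1) (.sq 33 3)) (.nd (.sq 35 2) (.oc [1] [0,2] [0,1,2] 26 32 8) (.sq 37 1))) (.sq 29 4) (.sq 35 1)))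 (.oc [2] [0] [1] 10 31 6)) (.sq 32 1) (.sq 30 2)) (.sq 31 1))) (.sq 27 2)) (.oc [1] [0] [2] 26 5 8) (.sq 28 1))) (.sq 26 1) (.sq 22 3)) (.nd (.sq 24 2) (.nd (.oc [0] [1] [2] 4 25 0) (.sq 27 1) (.nd (.nd (.sq 29 1) (.nd (.nd (.sq 31 1) (.sq 29 2) (.oc [2] [1,0] [1,2,0] 20 26 2)) (.sq 30 1) (.nd (.sq 27 3) (.sq 11 11) (.sq 31 1))) (.sq 23 4)) (.sq 26 2) (.sq 28 1))) (.sq 26 1))) (.sq 18 4) (.sq 24 1))) (.oc [2] [0] [1] 10 20 6)) (.sq 21 1) (.sq 19 2)) (.sq 20 1))) (.sq 12 4)) (.sq 15 2) (.sq 17 1))) (.sq 15 1))) (.nd (.nd (.sq 15 1) (.nd (.sq 14 2) (.sq 16 1) (.nd (.nd (.sq 18 1) (.nd (.nd (.sq 20 1) (.sq 18 2) (.sq 0 11)) (.sq 19 1) (.sq 15 3)) (.nd (.sq 17 2) (.nd (.oc [0] [1] [2] 4 18 0) (.sq 20 1) (.nd (.nd (.sq 22 1) (.nd (.nd (.sq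 24 1) (.sq 22 2) (.oc [2] [1,0] [1,2,0] 13 19 2)) (.sq 23 1) (.nd (.sq 20 3) (.nd (.nd (.sq 26 1) (.nd (.sq 25 2) (.sq 27 1) (.nd (.nd (.sq 29 1) (.nd (.nd (.sq 31 1) (.sq 29 2) (.nd (.nd (.sq 33 1) (.nd (.sq 28 4) (.sq 34 1) (.nd (.nd (.sq 36 1) (.sq 32 3) (.nd (.sq 35 2) (.oc [1] [0,2] [0,1,2] 8 14 30) (.sq 37 1))) (.nd (.nd (.sq 37 1) (.nd (.sq 36 2) (.sq 38 1) (.nd (.nd (.sq 40 1) (.nd (.sq 21 11) (.sq 41 1) (.sq 37 3)) (.nd (.sq 39 2) (.nd (.oc [0] [1] [2] 4 40 0) (.sq 42 1) (.sq 0 22)) (.sq 41 1))) (.sq 33 4) (.sq 39 1))) (.oc [2] [0] [1] 10 35 6)) (.sq 36 1) (.sq 34 2)) (.sq 35 1))) (.sq 31 2)) (.oc [1] [0] [2] 30 5 8) (.sq 32 1))) (.sq 30 1) (.sq 26 3)) (.nd (.sq 28 2) (.sq 10 11) (.sq 30 1))) (.sq 22 4) (.sq 28 1))) (.oc [2] [0]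 [1] 10 24 6)) (.sq 25 1) (.sq 23 2)) (.sq 24 1))) (.sq 16 4)) (.sq 19 2) (.sq 21 1))) (.sq 19 1))) (.sq 11 4) (.sq 17 1))) (.oc [2] [0] [1] 10 13 6)) (.sq 14 1) (.sq 12 2)) (.sq 13 1))) (.sq 9 2)) (.nd (.oc [0] [1] [2] 4 9 0) (.sq 11 1) (.nd (.nd (.sq 13 1) (.nd (.nd (.sq 15 1) (.sq 13 2) (.sq 5 6)) (.sq 14 1) (.nd (.sq 11 3) (.nd (.nd (.sq 17 1) (.nd (.sq 16 2) (.sq 18 1) (.nd (.nd (.sq 20 1) (.nd (.nd (.sq 22 1) (.sq 20 2) (.nd (.nd (.sq 24 1) (.oc [1] [0] [2] 8 5 21) (.sq 22 2)) (.nd (.oc [0] [1] [2] 4 22 0) (.sq 24 1) (.sq 0 13)) (.sq 23 1))) (.sq 21 1) (.sq 17 3)) (.nd (.sq 19 2) (.oc [1] [2] [0] 5 8 18) (.sq 21 1))) (.sq 13 4) (.sq 19 1))) (.oc [2] [0] [1] 12 15 6)) (.sq 16 1) (.sq 14 2)) (.sq 15 1))) (.nd (.sq 12 2) (.oc [1]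 [2] [0] 5 8 11) (.sq 14 1))) (.sq 10 2) (.sq 12 1))) (.sq 10 1))) (.sq 8 1) (.sq 4 3)) (.nd (.sq 6 2) (.nd (.oc [0] [1] [2] 4 7 0) (.sq 9 1) (.nd (.nd (.sq 11 1) (.nd (.nd (.sq 13 1) (.sq 11 2) (.nd (.nd (.sq 15 1) (.nd (.sq 10 4) (.sq 16 1) (.nd (.nd (.sq 18 1) (.sq 14 3) (.nd (.sq 17 2) (.nd (.oc [0] [1] [2] 4 18 0) (.sq 20 1) (.nd (.nd (.sq 22 1) (.nd (.nd (.sq 24 1) (.sq 22 2) (.sq 4 11)) (.sq 23 1) (.nd (.sq 20 3) (.nd (.nd (.sq 26 1) (.nd (.sq 25 2) (.sq 27 1) (.nd (.nd (.sq 29 1) (.nd (.nd (.sq 31 1) (.sq 29 2) (.oc [2] [1,0] [1,2,0] 2 8 24)) (.sq 30 1) (.sq 26 3)) (.nd (.sq 28 2) (.nd (.oc [0] [1] [2] 4 29 0) (.sq 31 1) (.nd (.nd (.sq 33 1) (.nd (.nd (.sq 35 1) (.sq 33 2) (.nd (.nd (.sq 37 1) (.nd (.sq 32 4) (.sq 38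 1) (.nd (.nd (.sq 40 1) (.sq 36 3) (.nd (.sq 39 2) (.nd (.oc [0] [1] [2] 4 40 0) (.sq 42 1) (.sq 0 22)) (.sq 41 1))) (.oc [1] [0,2] [0,1,2] 34 3 12) (.sq 39 1))) (.sq 35 2)) (.oc [1] [0] [2] 34 9 12) (.sq 36 1))) (.sq 34 1) (.nd (.sq 31 3) (.sq 15 11) (.sq 35 1))) (.sq 27 4)) (.sq 30 2) (.sq 32 1))) (.sq 30 1))) (.sq 22 4) (.sq 28 1))) (.oc [2] [0] [1] 14 24 10)) (.sq 25 1) (.sq 23 2)) (.sq 24 1))) (.sq 16 4)) (.sq 19 2) (.sq 21 1))) (.sq 19 1))) (.nd (.nd (.sq 19 1) (.nd (.sq 18 2) (.sq 20 1) (.nd (.nd (.sq 22 1) (.nd (.nd (.sq 24 1) (.sq 22 2) (.oc [2] [1,0] [1,2,0] 2 8 17)) (.sq 23 1) (.sq 19 3)) (.nd (.sq 21 2) (.nd (.oc [0] [1] [2] 4 22 0) (.sq 24 1) (.nd (.nd (.sq 26 1) (.nd (.nd (.sq 28 1) (.sq 26 2) (.sq 0 15)) (.sq 27 1) (.nd (.sq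 24 3) (.nd (.oc [0] [2,1] [2,0,1] 7 13 22) (.sq 29 1) (.sq 27 2)) (.sq 28 1))) (.sq 20 4)) (.sq 23 2) (.sq 25 1))) (.sq 23 1))) (.sq 15 4) (.sq 21 1))) (.oc [2] [0] [1] 14 17 10)) (.sq 18 1) (.sq 16 2)) (.sq 17 1))) (.sq 13 2)) (.oc [1] [2] [0] 9 12 5) (.sq 14 1))) (.sq 12 1) (.nd (.sq 9 3) (.nd (.nd (.sq 15 1) (.nd (.sq 14 2) (.sq 16 1) (.nd (.nd (.sq 18 1) (.nd (.nd (.sq 20 1) (.sq 18 2) (.nd (.nd (.sq 22 1) (.nd (.sq 17 4) (.sq 23 1) (.nd (.nd (.sq 25 1) (.sq 21 3) (.nd (.sq 24 2) (.nd (.oc [0] [1] [2] 4 25 0) (.sq 27 1) (.nd (.nd (.sq 29 1) (.nd (.nd (.sq 31 1) (.sq 29 2) (.oc [2] [1,0] [1,2,0] 2 26 13)) (.sq 30 1) (.nd (.sq 27 3) (.nd (.nd (.sq 33 1) (.nd (.sq 32 2) (.sq 34 1) (.nd (.nd (.sq 36 1) (.nd (.nd (.sq 38 1) (.sq 36 2)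 (.sq 4 18)) (.sq 37 1) (.sq 33 3)) (.nd (.sq 35 2) (.nd (.oc [0] [1] [2] 4 36 0) (.sq 38 1) (.nd (.nd (.sq 40 1) (.nd (.nd (.sq 42 1) (.sq 40 2) (.oc [2] [1,0] [1,2,0] 2 37 13)) (.sq 41 1) (.nd (.sq 38 3) (.sq 22 11) (.sq 42 1))) (.sq 34 4)) (.sq 37 2) (.sq 39 1))) (.sq 37 1))) (.sq 29 4) (.sq 35 1))) (.oc [2] [0] [1] 10 31 17)) (.sq 32 1) (.sq 30 2)) (.sq 31 1))) (.sq 23 4)) (.sq 26 2) (.sq 28 1))) (.sq 26 1))) (.nd (.nd (.sq 26 1) (.nd (.sq 25 2) (.sq 27 1) (.nd (.nd (.sq 29 1) (.nd (.sq 10 11) (.sq 30 1) (.sq 26 3)) (.nd (.sq 28 2) (.nd (.oc [0] [1] [2] 4 29 0) (.sq 31 1) (.nd (.nd (.sq 33 1) (.nd (.oc [0] [2,1] [2,0,1] 29 20 7) (.sq 34 1) (.nd (.sq 31 3) (.nd (.nd (.sq 37 1) (.nd (.sq 36 2) (.sq 38 1) (.nd (.nd (.sq 40 1) (.nd (.nd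 (.sq 42 1) (.sq 40 2) (.sq 0 22)) (.sq 41 1) (.sq 37 3)) (.nd (.sq 39 2) (.sq 21 11) (.sq 41 1))) (.sq 33 4) (.sq 39 1))) (.oc [2] [0] [1] 10 35 17)) (.sq 36 1) (.sq 34 2)) (.sq 35 1))) (.sq 27 4)) (.sq 30 2) (.sq 32 1))) (.sq 30 1))) (.sq 22 4) (.sq 28 1))) (.oc [2] [0] [1] 10 24 17)) (.sq 25 1) (.sq 23 2)) (.sq 24 1))) (.sq 20 2)) (.oc [1] [2] [0] 9 19 5) (.sq 21 1))) (.sq 19 1) (.sq 15 3)) (.nd (.sq 17 2) (.nd (.oc [0] [1] [2] 4 18 0) (.sq 20 1) (.sq 0 11)) (.sq 19 1))) (.sq 11 4) (.sq 17 1))) (.oc [2] [1] [0] 13 10 2)) (.sq 14 1) (.sq 12 2)) (.sq 13 1))) (.sq 5 4)) (.sq 8 2) (.sq 10 1))) (.sq 8 1))) (.sq 0 4) (.sq 6 1))) (.nd (.nd (.sq 6 1) (.nd (.nd (.sq 8 1) (.sq 6 2) (.nd (.sq 3 4) (.nd (.nd (.sq 11 1) (.nd (.sq 10 2) (.sq 12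 1) (.nd (.oc [0] [1] [2] 11 8 0) (.nd (.nd (.sq 15 1) (.sq 9 4) (.nd (.nd (.sq 17 1) (.nd (.nd (.sq 19 1) (.sq 17 2) (.nd (.sq 14 4) (.sq 0 11) (.sq 20 1))) (.sq 18 1) (.oc [2] [0] [1] 16 2 5)) (.sq 15 2)) (.nd (.sq 13 3) (.sq 17 1) (.nd (.nd (.sq 19 1) (.oc [1] [0] [2] 7 17 3) (.nd (.sq 18 2) (.nd (.nd (.sq 22 1) (.nd (.sq 21 2) (.sq 23 1) (.nd (.oc [0] [1] [2] 22 8 0) (.nd (.nd (.sq 26 1) (.sq 20 4) (.nd (.nd (.sq 28 1) (.nd (.nd (.sq 30 1) (.sq 28 2) (.nd (.sq 25 4) (.nd (.nd (.sq 33 1) (.nd (.sq 32 2) (.sq 34 1) (.nd (.oc [0] [1] [2] 33 8 0) (.nd (.nd (.sq 37 1) (.sq 31 4) (.nd (.nd (.sq 39 1) (.sq 19 11) (.sq 37 2)) (.nd (.sq 35 3) (.sq 39 1) (.nd (.nd (.sq 41 1) (.oc [1] [0] [2] 7 39 3) (.nd (.sq 40 2) (.sq 0 22) (.sq 42 1)))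 (.sq 38 2) (.sq 40 1))) (.sq 38 1))) (.sq 36 1) (.sq 34 2)) (.sq 35 1))) (.sq 29 3)) (.sq 32 1) (.oc [2] [0,1] [0,2,1] 27 18 5)) (.sq 31 1))) (.sq 29 1) (.oc [2] [0] [1] 27 2 5)) (.sq 26 2)) (.nd (.sq 24 3) (.sq 28 1) (.sq 8 11)) (.sq 27 1))) (.sq 25 1) (.sq 23 2)) (.sq 24 1))) (.nd (.nd (.sq 24 1) (.nd (.nd (.sq 26 1) (.sq 24 2) (.nd (.sq 21 4) (.nd (.nd (.sq 29 1) (.nd (.sq 28 2) (.sq 30 1) (.nd (.oc [0] [1] [2] 29 8 0) (.nd (.nd (.sq 33 1) (.sq 27 4) (.nd (.nd (.sq 35 1) (.nd (.nd (.sq 37 1) (.sq 35 2) (.nd (.sq 32 4) (.nd (.nd (.sq 40 1) (.sq 20 11) (.sq 36 3)) (.sq 39 1) (.nd (.oc [0] [1,2] [1,0,2] 0 35 11) (.sq 38 2) (.sq 40 1))) (.sq 38 1))) (.sq 36 1) (.oc [2] [0] [1] 34 2 5)) (.sq 33 2)) (.nd (.sq 31 3) (.sq 35 1) (.nd (.sq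 2 18) (.sq 34 2) (.sq 36 1))) (.sq 34 1))) (.sq 32 1) (.sq 30 2)) (.sq 31 1))) (.sq 25 3)) (.sq 28 1) (.nd (.oc [0] [1,2] [1,0,2] 0 24 11) (.sq 27 2) (.sq 29 1))) (.sq 27 1))) (.sq 25 1) (.oc [2] [0] [1] 23 2 5)) (.sq 22 2)) (.sq 19 3) (.sq 23 1))) (.sq 21 1) (.sq 15 4)) (.sq 20 1))) (.sq 16 2) (.sq 18 1))) (.sq 16 1))) (.sq 14 1) (.sq 12 2)) (.sq 13 1))) (.sq 7 3)) (.sq 10 1) (.nd (.nd (.sq 12 1) (.oc [1] [0] [2] 7 10 3) (.nd (.sq 11 2) (.nd (.nd (.sq 15 1) (.nd (.sq 14 2) (.sq 16 1) (.nd (.oc [0] [1] [2] 15 12 0) (.nd (.nd (.sq 19 1) (.sq 13 4) (.nd (.nd (.sq 21 1) (.nd (.nd (.sq 23 1) (.sq 21 2) (.nd (.sq 18 4) (.nd (.nd (.sq 26 1) (.nd (.sq 25 2) (.sq 27 1) (.oc [2] [0,1] [0,2,1] 5 11 20)) (.sq 22 3)) (.sq 25 1) (.nd (.nd (.sq 27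 1) (.oc [1] [0] [2] 7 25 3) (.nd (.sq 26 2) (.sq 0 15) (.sq 28 1))) (.sq 24 2) (.sq 26 1))) (.sq 24 1))) (.sq 22 1) (.oc [2] [0] [1] 20 2 5)) (.sq 19 2)) (.nd (.sq 17 3) (.sq 21 1) (.nd (.oc [0] [1,2] [1,0,2] 0 6 15) (.sq 20 2) (.sq 22 1))) (.sq 20 1))) (.sq 18 1) (.sq 16 2)) (.sq 17 1))) (.nd (.nd (.sq 17 1) (.nd (.nd (.sq 19 1) (.sq 17 2) (.nd (.sq 14 4) (.nd (.nd (.sq 22 1) (.nd (.sq 21 2) (.sq 23 1) (.nd (.oc [0] [1] [2] 22 12 0) (.nd (.nd (.sq 26 1) (.sq 20 4) (.nd (.nd (.sq 28 1) (.nd (.nd (.sq 30 1) (.sq 28 2) (.nd (.sq 25 4) (.nd (.nd (.sq 33 1) (.sq 13 11) (.sq 29 3)) (.sq 32 1) (.nd (.nd (.sq 34 1) (.oc [1] [0] [2] 7 32 3) (.nd (.sq 33 2) (.nd (.nd (.sq 37 1) (.oc [1] [2,0] [2,1,0] 32 1 10) (.nd (.nd (.sq 39 1) (.nd (.nd (.sq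 41 1) (.sq 39 2) (.nd (.sq 36 4) (.sq 0 22) (.sq 42 1))) (.sq 40 1) (.oc [2] [0] [1] 38 2 5)) (.sq 37 2)) (.sq 34 3) (.sq 38 1))) (.sq 36 1) (.sq 30 4)) (.sq 35 1))) (.sq 31 2) (.sq 33 1))) (.sq 31 1))) (.sq 29 1) (.oc [2] [0] [1] 27 2 5)) (.sq 26 2)) (.nd (.sq 24 3) (.sq 28 1) (.nd (.oc [0] [1,2] [1,0,2] 0 6 22) (.sq 27 2) (.sq 29 1))) (.sq 27 1))) (.sq 25 1) (.sq 23 2)) (.sq 24 1))) (.sq 18 3)) (.sq 21 1) (.nd (.sq 2 11) (.sq 20 2) (.sq 22 1))) (.sq 20 1))) (.sq 18 1) (.oc [2] [0] [1] 16 2 5)) (.sq 15 2)) (.sq 12 3) (.sq 16 1))) (.sq 14 1) (.sq 8 4)) (.sq 13 1))) (.sq 9 2) (.sq 11 1))) (.sq 9 1))) (.sq 7 1) (.nd (.nd (.sq 9 1) (.sq 5 3) (.nd (.sq 8 2) (.nd (.oc [0] [1] [2] 6 9 0) (.sq 11 1) (.nd (.nd (.sq 13 1) (.nd (.nd (.sq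 15 1) (.sq 13 2) (.oc [2] [0] [1] 5 2 12)) (.sq 14 1) (.nd (.sq 11 3) (.nd (.nd (.sq 17 1) (.nd (.sq 16 2) (.sq 18 1) (.oc [2] [1] [0] 2 5 15)) (.nd (.nd (.sq 19 1) (.nd (.nd (.sq 21 1) (.sq 19 2) (.oc [2] [0] [1] 5 2 18)) (.sq 20 1) (.nd (.nd (.sq 22 1) (.sq 18 3) (.nd (.sq 21 2) (.nd (.oc [0] [1] [2] 6 22 0) (.sq 24 1) (.sq 0 13)) (.sq 23 1))) (.nd (.sq 12 6) (.sq 22 1) (.sq 20 2)) (.sq 21 1))) (.sq 17 2)) (.oc [1] [0] [2] 16 11 3) (.sq 18 1))) (.sq 16 1) (.sq 14 2)) (.sq 15 1))) (.sq 7 4)) (.sq 10 2) (.sq 12 1))) (.sq 10 1))) (.nd (.nd (.sq 10 1) (.nd (.sq 9 2) (.sq 11 1) (.oc [2] [1] [0] 2 5 8)) (.sq 0 6)) (.sq 9 1) (.sq 7 2)) (.sq 8 1))) (.sq 4 2)) (.nd (.sq 2 3) (.sq 6 1) (.nd (.nd (.sq 8 1) (.nd (.nd (.sq 10 1) (.sq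 8 2) (.nd (.nd (.sq 12 1) (.oc [1] [0] [2] 3 6 9) (.sq 10 2)) (.nd (.nd (.sq 13 1) (.nd (.sq 12 2) (.sq 14 1) (.nd (.oc [0] [1] [2] 13 10 0) (.nd (.nd (.sq 17 1) (.sq 11 4) (.nd (.nd (.sq 19 1) (.oc [1] [0] [2] 3 6 16) (.sq 17 2)) (.nd (.sq 15 3) (.sq 19 1) (.nd (.nd (.sq 21 1) (.nd (.nd (.sq 23 1) (.sq 21 2) (.nd (.nd (.sq 25 1) (.oc [1] [0] [2] 3 6 22) (.sq 23 2)) (.sq 0 13) (.sq 24 1))) (.sq 22 1) (.oc [2] [0] [1] 20 2 7)) (.nd (.sq 20 2) (.oc [1] [2] [0] 6 3 19) (.sq 22 1))) (.sq 18 2) (.sq 20 1))) (.sq 18 1))) (.sq 16 1) (.sq 14 2)) (.sq 15 1))) (.sq 9 3)) (.sq 12 1) (.nd (.sq 3 6) (.sq 11 2) (.sq 13 1))) (.sq 11 1))) (.sq 9 1) (.nd (.sq 6 3) (.nd (.nd (.sq 12 1) (.nd (.sq 11 2) (.sq 13 1) (.oc [2] [1] [0] 2 7 10)) (.nd (.nd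 (.sq 14 1) (.oc [1] [0] [2] 3 6 11) (.sq 12 2)) (.nd (.sq 10 3) (.sq 14 1) (.sq 0 8)) (.sq 13 1))) (.sq 11 1) (.sq 9 2)) (.sq 10 1))) (.nd (.sq 7 2) (.nd (.nd (.sq 11 1) (.nd (.sq 10 2) (.sq 12 1) (.nd (.oc [0] [1] [2] 11 8 0) (.nd (.nd (.sq 15 1) (.sq 9 4) (.nd (.nd (.sq 17 1) (.nd (.nd (.sq 19 1) (.sq 17 2) (.nd (.sq 14 4) (.nd (.nd (.sq 22 1) (.nd (.sq 21 2) (.sq 23 1) (.nd (.oc [0] [1] [2] 22 8 0) (.nd (.nd (.sq 26 1) (.sq 20 4) (.nd (.nd (.sq 28 1) (.sq 8 11) (.sq 26 2)) (.nd (.sq 24 3) (.sq 28 1) (.nd (.nd (.sq 30 1) (.oc [1] [0] [2] 3 28 14) (.nd (.sq 29 2) (.nd (.nd (.sq 33 1) (.nd (.sq 32 2) (.sq 34 1) (.nd (.oc [0] [1] [2] 33 8 0) (.nd (.nd (.sq 37 1) (.sq 31 4) (.nd (.nd (.sq 39 1) (.nd (.nd (.sq 41 1) (.sq 39 2) (.nd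 (.sq 36 4) (.sq 0 22) (.sq 42 1))) (.sq 40 1) (.oc [2] [0] [1] 38 2 16)) (.sq 37 2)) (.nd (.sq 35 3) (.sq 39 1) (.sq 19 11)) (.sq 38 1))) (.sq 36 1) (.sq 34 2)) (.sq 35 1))) (.nd (.nd (.sq 35 1) (.oc [1] [2,0] [2,1,0] 6 12 28) (.sq 33 2)) (.sq 30 3) (.sq 34 1))) (.sq 32 1) (.sq 26 4)) (.sq 31 1))) (.sq 27 2) (.sq 29 1))) (.sq 27 1))) (.sq 25 1) (.sq 23 2)) (.sq 24 1))) (.sq 18 3)) (.sq 21 1) (.nd (.oc [0] [1,2] [1,0,2] 11 17 0) (.sq 20 2) (.sq 22 1))) (.sq 20 1))) (.sq 18 1) (.oc [2] [1] [0] 2 16 9)) (.sq 15 2)) (.nd (.sq 13 3) (.sq 17 1) (.nd (.nd (.sq 19 1) (.oc [1] [2] [0] 17 3 6) (.nd (.sq 18 2) (.sq 0 11) (.sq 20 1))) (.sq 16 2) (.sq 18 1))) (.sq 16 1))) (.sq 14 1) (.sq 12 2)) (.sq 13 1))) (.nd (.nd (.sq 13 1) (.nd (.nd (.sq 15 1)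 (.sq 13 2) (.nd (.sq 10 4) (.nd (.nd (.sq 18 1) (.nd (.sq 17 2) (.sq 19 1) (.nd (.oc [0] [1] [2] 18 8 0) (.nd (.nd (.sq 22 1) (.sq 16 4) (.nd (.nd (.sq 24 1) (.nd (.nd (.sq 26 1) (.sq 24 2) (.nd (.sq 21 4) (.nd (.nd (.sq 29 1) (.sq 9 11) (.sq 25 3)) (.sq 28 1) (.nd (.oc [0] [1,2] [1,0,2] 18 24 0) (.sq 27 2) (.sq 29 1))) (.sq 27 1))) (.sq 25 1) (.oc [2] [0] [1] 23 2 12)) (.sq 22 2)) (.nd (.sq 20 3) (.sq 24 1) (.nd (.nd (.sq 26 1) (.oc [1] [0] [2] 3 24 10) (.nd (.sq 25 2) (.nd (.nd (.sq 29 1) (.nd (.sq 28 2) (.sq 30 1) (.nd (.oc [0] [1] [2] 29 8 0) (.nd (.nd (.sq 33 1) (.sq 27 4) (.nd (.nd (.sq 35 1) (.oc [1] [2,0] [2,1,0] 24 30 6) (.sq 33 2)) (.nd (.sq 31 3) (.sq 35 1) (.sq 15 11)) (.sq 34 1))) (.sq 32 1) (.sq 30 2)) (.sq 31 1))) (.nd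 (.nd (.sq 31 1) (.nd (.nd (.sq 33 1) (.sq 31 2) (.nd (.sq 28 4) (.sq 0 18) (.sq 34 1))) (.sq 32 1) (.oc [2] [0] [1] 30 2 12)) (.sq 29 2)) (.sq 26 3) (.sq 30 1))) (.sq 28 1) (.sq 22 4)) (.sq 27 1))) (.sq 23 2) (.sq 25 1))) (.sq 23 1))) (.sq 21 1) (.sq 19 2)) (.sq 20 1))) (.sq 14 3)) (.sq 17 1) (.nd (.nd (.sq 19 1) (.oc [1] [0] [2] 3 17 10) (.nd (.sq 18 2) (.nd (.nd (.sq 22 1) (.nd (.sq 21 2) (.sq 23 1) (.nd (.oc [0] [1] [2] 22 8 0) (.nd (.nd (.sq 26 1) (.sq 20 4) (.nd (.oc [0] [1,2] [1,0,2] 22 13 0) (.nd (.sq 24 3) (.sq 28 1) (.nd (.nd (.sq 30 1) (.oc [1] [0] [2] 3 28 10) (.nd (.sq 29 2) (.nd (.nd (.sq 33 1) (.nd (.sq 32 2) (.sq 34 1) (.sq 14 11)) (.nd (.nd (.sq 35 1) (.nd (.nd (.sq 37 1) (.sq 35 2) (.nd (.sq 32 4) (.nd (.nd (.sq 40 1)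 (.nd (.sq 39 2) (.sq 41 1) (.oc [2] [0,1] [0,2,1] 12 18 34)) (.sq 36 3)) (.sq 39 1) (.nd (.nd (.sq 41 1) (.oc [1] [0] [2] 3 39 10) (.nd (.sq 40 2) (.sq 0 22) (.sq 42 1))) (.sq 38 2) (.sq 40 1))) (.sq 38 1))) (.sq 36 1) (.oc [2] [0] [1] 34 2 12)) (.sq 33 2)) (.sq 30 3) (.sq 34 1))) (.sq 32 1) (.sq 26 4)) (.sq 31 1))) (.sq 27 2) (.sq 29 1))) (.sq 27 1))) (.sq 25 1) (.sq 23 2)) (.sq 24 1))) (.nd (.sq 3 11) (.sq 19 3) (.sq 23 1))) (.sq 21 1) (.sq 15 4)) (.sq 20 1))) (.sq 16 2) (.sq 18 1))) (.sq 16 1))) (.sq 14 1) (.nd (.oc [0] [1] [2] 13 8 0) (.nd (.nd (.sq 17 1) (.nd (.sq 16 2) (.sq 18 1) (.oc [2] [1] [0] 2 12 15)) (.nd (.nd (.sq 19 1) (.sq 9 6) (.sq 17 2)) (.nd (.sq 15 3) (.sq 19 1) (.nd (.nd (.sq 21 1) (.oc [1] [0] [2] 3 19 10) (.nd (.sq 20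 2) (.nd (.nd (.sq 24 1) (.nd (.sq 23 2) (.sq 25 1) (.oc [2] [1] [0] 2 12 22)) (.sq 0 13)) (.sq 23 1) (.sq 17 4)) (.sq 22 1))) (.sq 18 2) (.sq 20 1))) (.sq 18 1))) (.sq 16 1) (.sq 14 2)) (.sq 15 1))) (.sq 11 2)) (.sq 8 3) (.sq 12 1))) (.sq 10 1) (.sq 4 4)) (.sq 9 1))) (.sq 5 2) (.sq 7 1))) (.sq 5 1))) (.sq 3 1) (.sq 1 2)) (.sq 2 1)))

set_option maxRecDepth 100000 in
set_option maxHeartbeats 2000000 in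
theorem bigT_chk : chk bigT [1, 0] = true := by decide

set_option maxRecDepth 100000 in
theorem bigT_dep : dep bigT ≤ 46 := by decide


section PartC

variable {w : ℕ → Fin 3}

def Sw (w : ℕ → Fin 3) : Set (List (Fin 3)) := {u | ∀ N, ∃ i ≥ N, u = extract w i u.length}

def Adm (L : Set (List (Fin 3))) : Prop :=
  [] ∈ L ∧ (∀ u v : List (Fin 3), u <:+: v → v ∈ L → u ∈ L) ∧
    ∀ u ∈ L, ∃ x : Fin 3, u ++ [x] ∈ L

lemma Sw_factor {u : List (Fin 3)} (h : u ∈ Sw w) : IsFactorOf u w := by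
  obtain ⟨i, _, hi⟩ := h 0
  exact ⟨i, hi⟩

lemma infix_pos {α : Type*} {w' : ℕ → α} {u : List α} {s n : ℕ}
    (h : u <:+: extract w' s n) :
    ∃ d, d + u.length ≤ n ∧ u = extract w' (s + d) u.length := by
  obtain ⟨a, b, hab⟩ := h
  have hn : n = a.length + (u.length + b.length) := by
    have := congrArg List.length hab
    simp [extract_length] at this
    omega
  have h1 : a ++ (u ++ b) = extract w' s n := by
    rw [← hab]; simp
  obtain ⟨-, h2⟩ := split2' h1 (by simp; omega)
  obtain ⟨h3, -⟩ := split2' h2 (by simp)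
  exact ⟨a.length, by omega, h3⟩

lemma extract_prefix_infix {α : Type*} {w' : ℕ → α} {s l n : ℕ} (h : l ≤ n) :
    extract w' s l <:+: extract w' s n := by
  have := extract_infix_extract (w := w') (d := 0) (i := s) (l := l) (n := n) (by omega)
  simpa using this

lemma adm_Sw : Adm (Sw w) := by
  refine ⟨?_, ?_, ?_⟩
  · intro N
    exact ⟨N, le_rfl, by simp [extract]⟩
  · intro u v huv hv N
    obtain ⟨i, hiN, hi⟩ := hv N
    obtain ⟨d, _, hd⟩ := infix_pos (hi ▸ huv)
    exact ⟨i + d, by omega, hd⟩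
  · intro u hu
    by_contra hnone
    push_neg at hnone
    have hx : ∀ x : Fin 3, ∃ Nx, ∀ i ≥ Nx, u ++ [x] ≠ extract w i (u ++ [x]).length := by
      intro x
      have := hnone x
      simp only [Sw, Set.mem_setOf_eq] at this
      push_neg at this
      exact this
    choose Nf hNf using hx
    obtain ⟨i, hiN, hi⟩ := hu (Nf 0 ⊔ Nf 1 ⊔ Nf 2)
    have hext : u ++ [w (i + u.length)] = extract w i (u ++ [w (i + u.length)]).length := by
      rw [show (u ++ [w (i + u.length)]).length = u.length + 1 from by simp]
      have h1 : extract w (i + u.length) 1 = [w (i + u.length)] := by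
        show List.map _ (List.range 1) = _
        rw [List.range_succ]
        simp [extract]
      rw [extract_add, ← hi, h1]
    have hle : ∀ x : Fin 3, Nf x ≤ Nf 0 ⊔ Nf 1 ⊔ Nf 2 := by
      intro x
      fin_cases x <;> simp
    exact hNf (w (i + u.length)) i (le_trans (hle _) hiN) hext

lemma exists_minimal (w : ℕ → Fin 3) :
    ∃ L, (Adm L ∧ L ⊆ Sw w) ∧ ∀ L', (Adm L' ∧ L' ⊆ Sw w) → L' ⊆ L → L' = L := by
  classical
  set S : Set (Set (List (Fin 3))) := {L | Adm L ∧ L ⊆ Sw w} with hS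
  have hchain : ∀ c ⊆ S, IsChain (· ⊆ ·) c → c.Nonempty →
      ∃ lb ∈ S, ∀ s ∈ c, lb ⊆ s := by
    intro c hcS hchain ⟨L0, hL0⟩
    refine ⟨⋂₀ c, ⟨⟨?_, ?_, ?_⟩, ?_⟩, fun s hs => Set.sInter_subset_of_mem hs⟩
    · exact fun L hL => (hcS hL).1.1
    · intro u v huv hv L hL
      exact (hcS hL).1.2.1 u v huv (hv L hL)
    · intro u hu
      by_contra hnone
      push_neg at hnone
      have hx : ∀ x : Fin 3, ∃ Lx ∈ c, u ++ [x] ∉ Lx := by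
        intro x
        have := hnone x
        simp only [Set.mem_sInter] at this
        push_neg at this
        exact this
      obtain ⟨La, hLa, hna⟩ := hx 0
      obtain ⟨Lb, hLb, hnb⟩ := hx 1
      obtain ⟨Lc, hLc, hnc⟩ := hx 2
      -- find a common lower bound among the three
      have h3 : ∃ Lstar ∈ c, Lstar ⊆ La ∧ Lstar ⊆ Lb ∧ Lstar ⊆ Lc := by
        have hab := hchain.total hLa hLb
        have hac := hchain.total hLa hLc
        have hbc := hchain.total hLb hLc
        rcases hab with h1 | h1 <;> rcases hac with h2 | h2 <;> rcases hbc with h3 | h3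
        · exact ⟨La, hLa, subset_rfl, h1, h2⟩
        · exact ⟨La, hLa, subset_rfl, h1, h2⟩
        · exact ⟨La, hLa, subset_rfl, h1, h1.trans h3⟩
        · exact ⟨Lc, hLc, h2, h3, subset_rfl⟩
        · exact ⟨Lb, hLb, h1, subset_rfl, h3⟩
        · exact ⟨Lc, hLc, h3.trans h1, h3, subset_rfl⟩
        · exact ⟨Lb, hLb, h1, subset_rfl, h3⟩
        · exact ⟨Lc, hLc, h2, h3, subset_rfl⟩
      obtain ⟨Ls, hLs, hs1, hs2, hs3⟩ := h3
      obtain ⟨x, hx'⟩ := (hcS hLs).1.2.2 u (hu Ls hLs)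
      fin_cases x
      · exact hna (hs1 hx')
      · exact hnb (hs2 hx')
      · exact hnc (hs3 hx')
    · exact (Set.sInter_subset_of_mem hL0).trans (hcS hL0).2
  obtain ⟨m, hmx, hmS⟩ := zorn_superset_nonempty S hchain (Sw w) ⟨adm_Sw, subset_rfl⟩
  exact ⟨m, hmS.1, fun L' hL' hsub => hmS.eq_of_le hL' hsub⟩


lemma KL {L : Set (List (Fin 3))} (hL : Adm L ∧ L ⊆ Sw w)
    (hmin : ∀ L', (Adm L' ∧ L' ⊆ Sw w) → L' ⊆ L → L' = L)
    {u : List (Fin 3)} (hu : u ∈ L) :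
    ∃ K, ∀ v ∈ L, K ≤ v.length → u <:+: v := by
  by_contra hcon
  push_neg at hcon
  classical
  set T0 : Set (List (Fin 3)) := {v | v ∈ L ∧ ¬ u <:+: v} with hT0def
  have hT0fac : ∀ p v : List (Fin 3), p <:+: v → v ∈ T0 → p ∈ T0 := fun p v hpv hv =>
    ⟨hL.1.2.1 p v hpv hv.1, fun hup => hv.2 (hup.trans hpv)⟩
  set T : Set (List (Fin 3)) :=
    {t | t ∈ T0 ∧ ∀ K, ∃ y : List (Fin 3), K ≤ y.length ∧ t ++ y ∈ T0} with hTdef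
  have hTadm : Adm T := by
    refine ⟨?_, ?_, ?_⟩
    · obtain ⟨v0, hv0L, _, hv0n⟩ := hcon 0
      refine ⟨hT0fac [] v0 (by simp) ⟨hv0L, hv0n⟩, ?_⟩
      intro K
      obtain ⟨v, hvL, hvlen, hvn⟩ := hcon K
      exact ⟨v, hvlen, by rw [List.nil_append]; exact ⟨hvL, hvn⟩⟩
    · rintro p v hpv ⟨hv0, hvext⟩
      refine ⟨hT0fac p v hpv hv0, ?_⟩
      obtain ⟨a, b, hab⟩ := hpv
      intro K
      obtain ⟨y, hy1, hy2⟩ := hvext K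
      refine ⟨b ++ y, by simp; omega, ?_⟩
      refine hT0fac _ (v ++ y) ⟨a, [], ?_⟩ hy2
      rw [← hab]; simp
    · rintro t ⟨ht0, htext⟩
      by_contra hnone
      push_neg at hnone
      have hx : ∀ x : Fin 3, ∃ Kx, ∀ y : List (Fin 3), Kx ≤ y.length → (t ++ [x]) ++ y ∉ T0 := by
        intro x
        rcases Classical.em (∃ Kx, ∀ y : List (Fin 3), Kx ≤ y.length → (t ++ [x]) ++ y ∉ T0)
          with h | h
        · exact h
        · exfalso
          apply hnone x
          push_neg at h
          refine ⟨?_, fun K => by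
            obtain ⟨y, hy1, hy2⟩ := h K
            exact ⟨y, hy1, hy2⟩⟩
          obtain ⟨y, _, hy2⟩ := h 0
          exact hT0fac _ _ ⟨[], y, by simp⟩ hy2
      choose Kf hKf using hx
      obtain ⟨y, hy1, hy2⟩ := htext (Kf 0 ⊔ Kf 1 ⊔ Kf 2 + 1)
      match y, hy1, hy2 with
      | c :: y', hy1, hy2 =>
        have hmem : (t ++ [c]) ++ y' ∈ T0 := by
          rw [show (t ++ [c]) ++ y' = t ++ (c :: y') from by simp]
          exact hy2
        have hcle : Kf c ≤ Kf 0 ⊔ Kf 1 ⊔ Kf 2 := by fin_cases c <;> simp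
        refine hKf c y' ?_ hmem
        simp only [List.length_cons] at hy1
        omega
  have heq := hmin T ⟨hTadm, fun t ht => hL.2 ht.1.1⟩ (fun t ht => ht.1.1)
  rw [← heq] at hu
  exact hu.1.2 List.infix_rfl

lemma exists_len {L : Set (List (Fin 3))} (hadm : Adm L) :
    ∀ n, ∃ v ∈ L, v.length = n := by
  intro n
  induction n with
  | zero => exact ⟨[], hadm.1, rfl⟩
  | succ k ih =>
    obtain ⟨v, hvL, hvl⟩ := ih
    obtain ⟨x, hx⟩ := hadm.2.2 v hvL
    exact ⟨v ++ [x], hx, by simp [hvl]⟩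

lemma claimB {L : Set (List (Fin 3))} (hL : Adm L ∧ L ⊆ Sw w)
    (hmin : ∀ L', (Adm L' ∧ L' ⊆ Sw w) → L' ⊆ L → L' = L)
    {v : List (Fin 3)} (hv : v ∈ L) :
    ∃ z, v ++ (z ++ v) ∈ L := by
  obtain ⟨K, hK⟩ := KL hL hmin hv
  obtain ⟨V, hVL, hVlen⟩ := exists_len hL.1 (K + v.length + K)
  obtain ⟨s, -, hVs⟩ := hL.2 hVL 0
  rw [hVlen] at hVs
  have hpre : extract w s K <:+: V := by
    rw [hVs]; exact extract_prefix_infix (by omega)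
  have hpreL : extract w s K ∈ L := hL.1.2.1 _ _ hpre hVL
  obtain ⟨d1, hd1, hva⟩ := infix_pos (hK _ hpreL (by rw [extract_length]))
  have hsuf : extract w (s + (K + v.length)) K <:+: V := by
    rw [hVs]; exact extract_infix_extract (by omega)
  have hsufL : extract w (s + (K + v.length)) K ∈ L := hL.1.2.1 _ _ hsuf hVL
  obtain ⟨d2, hd2, hvb⟩ := infix_pos (hK _ hsufL (by rw [extract_length]))
  set i1 := d1 with hi1
  set i2 := K + v.length + d2 with hi2
  set z := extract w (s + i1 + v.length) (i2 - i1 - v.length) with hz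
  have hzlen : z.length = i2 - i1 - v.length := by rw [hz, extract_length]
  have h1 : v = extract w (s + i1) v.length := hva
  have h2 : z = extract w (s + i1 + v.length) z.length := by rw [hzlen]
  have h3 : v = extract w (s + i1 + v.length + z.length) v.length := by
    rw [hzlen, show s + i1 + v.length + (i2 - i1 - v.length) = s + (K + v.length) + d2 from by
      omega]
    exact hvb
  have hglue := glue3 h1 h2 h3
  have hinf : v ++ (z ++ v) <:+: V := by
    rw [hVs, hglue]
    have := extract_infix_extract (w := w) (d := i1)
      (l := v.length + (z.length + v.length)) (n := K + v.length + K) (i := s) (by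
        rw [hzlen]; omega)
    exact this
  exact ⟨z, hL.1.2.1 _ _ hinf hVL⟩

theorem noTernary (T : BT) (hT : chk T [1,0] = true) (hTd : dep T ≤ 46)
    (w : ℕ → Fin 3) : ¬ Avoids w impFormula := by
  intro hav
  obtain ⟨L, hLpair, hmin⟩ := exists_minimal w
  rcases Classical.em (∃ u : List (Fin 3), u ≠ [] ∧ u ++ u ∈ L) with ⟨u, hune, huu⟩ | hnosq
  · obtain ⟨m, hm⟩ := claimB hLpair hmin huu
    obtain ⟨n, hn⟩ := claimB hLpair hmin hm
    have hfac : IsFactorOf (((u ++ u) ++ (m ++ (u ++ u))) ++ (n ++ ((u ++ u) ++ (m ++ (u ++ u))))) w :=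
      Sw_factor (hLpair.2 hn)
    obtain ⟨h, hocc⟩ := occW w u m n hune hfac
    exact hav h hocc
  · push_neg at hnosq
    obtain ⟨V, hVL, hVlen⟩ := exists_len hLpair.1 48
    have hVsq : SqL V := fun x hx hinf => hnosq x hx (hLpair.1.2.1 _ _ hinf hVL)
    obtain ⟨A, B, C, hA, hB1, hB2, hC1, hC2, i1, i2, i3⟩ :=
      occ48 T hT hTd V hVlen hVsq
    have hVfac : IsFactorOf V w := Sw_factor (hLpair.2 hVL)
    classical
    refine hav (fun x => if x = 0 then A else if x = 1 then B else C) ⟨?_, ?_⟩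
    · intro x
      by_cases h0 : x = 0
      · simpa [h0] using List.ne_nil_of_length_pos (show 0 < A.length by omega)
      · by_cases h1 : x = 1
        · simpa [h0, h1] using List.ne_nil_of_length_pos (show 0 < B.length by omega)
        · simpa [h0, h1] using List.ne_nil_of_length_pos (show 0 < C.length by omega)
    · intro p hp
      simp only [impFormula, Set.mem_insert_iff, Set.mem_singleton_iff] at hp
      rcases hp with hp | hp | hp <;> subst hp
      · refine isFactor_of_infix ?_ hVfac
        have he : patImage (fun x : Fin 3 => if x = 0 then A else if x = 1 then B else C)
            [0,1,2,0] = A ++ B ++ C ++ A := by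
          simp [patImage, List.append_assoc]
        rw [he]; exact i1
      · refine isFactor_of_infix ?_ hVfac
        have he : patImage (fun x : Fin 3 => if x = 0 then A else if x = 1 then B else C)
            [0,2,1,0] = A ++ C ++ B ++ A := by
          simp [patImage, List.append_assoc]
        rw [he]; exact i2
      · refine isFactor_of_infix ?_ hVfac
        have he : patImage (fun x : Fin 3 => if x = 0 then A else if x = 1 then B else C)
            [0,1,2,1,0] = A ++ B ++ C ++ B ++ A := by
          simp [patImage, List.append_assoc]
        rw [he]; exact i3

end PartC
lemma occ_of_hasOcc {w : ℕ → Fin 3} {V : List (Fin 3)} (hVfac : IsFactorOf V w)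
    (hocc : HasOcc V) :
    ∃ h : Fin 3 → List (Fin 3), OccursIn impFormula h w ∧
      (h 0).length = 1 ∧ (h 1).length ≤ 2 ∧ (h 2).length ≤ 3 := by
  classical
  obtain ⟨A, B, C, hA, hB1, hB2, hC1, hC2, i1, i2, i3⟩ := hocc
  refine ⟨fun x => if x = 0 then A else if x = 1 then B else C, ⟨?_, ?_⟩, by simp [hA],
    by simp [hB2], by simp [hC2]⟩
  · intro x
    by_cases h0 : x = 0
    · simpa [h0] using List.ne_nil_of_length_pos (show 0 < A.length by omega)
    · by_cases h1 : x = 1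
      · simpa [h0, h1] using List.ne_nil_of_length_pos (show 0 < B.length by omega)
      · simpa [h0, h1] using List.ne_nil_of_length_pos (show 0 < C.length by omega)
  · intro p hp
    simp only [impFormula, Set.mem_insert_iff, Set.mem_singleton_iff] at hp
    rcases hp with hp | hp | hp <;> subst hp
    · refine isFactor_of_infix ?_ hVfac
      have he : patImage (fun x : Fin 3 => if x = 0 then A else if x = 1 then B else C)
          [0,1,2,0] = A ++ B ++ C ++ A := by
        simp [patImage, List.append_assoc]
      rw [he]; exact i1
    · refine isFactor_of_infix ?_ hVfac
      have he : patImage (fun x : Fin 3 => if x = 0 then A else if x = 1 then B else C)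
          [0,2,1,0] = A ++ C ++ B ++ A := by
        simp [patImage, List.append_assoc]
      rw [he]; exact i2
    · refine isFactor_of_infix ?_ hVfac
      have he : patImage (fun x : Fin 3 => if x = 0 then A else if x = 1 then B else C)
          [0,1,2,1,0] = A ++ B ++ C ++ B ++ A := by
        simp [patImage, List.append_assoc]
      rw [he]; exact i3

theorem partB (w : ℕ → Fin 3) (hsf : SquareFree w) :
    ∃ h : Fin 3 → List (Fin 3), OccursIn impFormula h w ∧
      (h 0).length = 1 ∧ (h 1).length ≤ 2 ∧ (h 2).length ≤ 3 := by
  have hVlen : (extract w 0 48).length = 48 := extract_length w 0 48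
  have hVsq : SqL (extract w 0 48) := fun x hx hinf =>
    hsf x hx (isFactor_of_infix hinf (extract_factor w 0 48))
  exact occ_of_hasOcc (extract_factor w 0 48)
    (occ48 bigT bigT_chk bigT_dep _ hVlen hVsq)

lemma patImage_map {V : Type*} {n m : ℕ} (h : V → List (Fin n)) (r : Fin n → Fin m)
    (p : List V) :
    patImage (fun v => (h v).map r) p = (patImage h p).map r := by
  induction p with
  | nil => rfl
  | cons a p ih =>
    show (h a).map r ++ patImage (fun v => (h v).map r) p = ((h a) ++ patImage h p).map r
    rw [List.map_append, ih]

def retr (m : ℕ) (hm : 0 < m) (h3 : m ≤ 3) : Fin 3 → Fin m :=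
  fun y => if hy : (y : ℕ) < m then ⟨y.val, hy⟩ else ⟨0, hm⟩

lemma retr_castLE (m : ℕ) (hm : 0 < m) (h3 : m ≤ 3) (x : Fin m) :
    retr m hm h3 (Fin.castLE h3 x) = x := by
  simp only [retr]
  split
  · exact Fin.ext rfl
  · exact absurd x.isLt (by assumption)

lemma map_retr_castLE (m : ℕ) (hm : 0 < m) (h3 : m ≤ 3) (u : List (Fin m)) :
    (u.map (Fin.castLE h3)).map (retr m hm h3) = u := by
  induction u with
  | nil => rfl
  | cons a t ih => simp only [List.map_cons, ih, retr_castLE]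

theorem partC4 : 4 ≤ lamIdx impFormula := by
  classical
  have hne : {n : ℕ | ∃ w : ℕ → Fin n, Avoids w impFormula}.Nonempty := ⟨4, w4, w4_avoids⟩
  have key : ∀ m : ℕ, (∃ w : ℕ → Fin m, Avoids w impFormula) → 4 ≤ m := by
    rintro m ⟨w, hw⟩
    by_contra hlt
    push_neg at hlt
    have h3 : m ≤ 3 := by omega
    rcases Nat.eq_zero_or_pos m with rfl | hm
    · exact (w 0).elim0
    have havoid3 : Avoids (fun i => Fin.castLE h3 (w i)) impFormula := by
      rintro h ⟨hne', hfac'⟩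
      refine hw (fun v => (h v).map (retr m hm h3)) ⟨?_, ?_⟩
      · intro v
        simp only [ne_eq, List.map_eq_nil_iff]
        exact hne' v
      · intro p hp
        obtain ⟨i, hi⟩ := hfac' p hp
        refine ⟨i, ?_⟩
        set L := (patImage h p).length with hL
        have hext : extract (fun i => Fin.castLE h3 (w i)) i L
            = (extract w i L).map (Fin.castLE h3) := by
          unfold extract
          rw [List.map_map]
          rfl
        have hmain : patImage (fun v => (h v).map (retr m hm h3)) p
            = extract w i L := by
          rw [patImage_map, hi, hext, map_retr_castLE]
        have hlen : (patImage (fun v => (h v).map (retr m hm h3)) p).length = L := by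
          rw [patImage_map, List.length_map]
        rw [hlen, hmain]
    exact noTernary bigT bigT_chk bigT_dep _ havoid3
  show 4 ≤ sInf {n : ℕ | ∃ w : ℕ → Fin n, Avoids w impFormula}
  exact key _ (Nat.sInf_mem hne)

end ST18

set_option maxHeartbeats 1000000 in
/-- every recurrent word avoiding ABCA.ACBA.ABCBA is square-free; no
infinite ternary square-free word avoids all occurrences h of the formula with
|h(A)| = 1, |h(B)| ≤ 2, |h(C)| ≤ 3; consequently λ(ABCA.ACBA.ABCBA) ≥ 4. -/
theorem stmt18 :
    (∀ (α : Type*) (w : ℕ → α), Recurrent w → Avoids w impFormula → SquareFree w) ∧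
    (∀ w : ℕ → Fin 3, SquareFree w → ∃ h : Fin 3 → List (Fin 3),
      OccursIn impFormula h w ∧
      (h 0).length = 1 ∧ (h 1).length ≤ 2 ∧ (h 2).length ≤ 3) ∧
    4 ≤ lamIdx impFormula :=
  ⟨fun _ w hrec hav => ST18.partA w hrec hav, fun w hsf => ST18.partB w hsf, ST18.partC4⟩
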